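/- arXiv:0903.2226 — 5 statements merged into one kernel-verified Lean document; each statement's English description precedes it below -/
import Mathlib

section
/- Let X and Y be independent rate-1 exponential random variables, let α ≥ 2 and 0 < r ≤ 1. Then lim_{ρ→∞} log P[ρ^α Y < (ρ^r − 1)(1 + ρX)] / log ρ = −(α−1−r). (This is the claim P(O_21) ≐ SNR^{−(α−1−r_2)^+} for α ≥ 2, where O_21 = {(h_11,h_21) : log₂(1 + SNR^α|h_21|²/(1+SNR|h_11|²)) < r_2 log₂ SNR} is the outage event of decoding the interfering transmitter at receiver 1 while treating the intended signal as noise.) -/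
open scoped ENNReal
open MeasureTheory ProbabilityTheory Filter Real Set

lemma myExp_Iic {t : ℝ} (ht : 0 ≤ t) :
    expMeasure 1 (Set.Iic t) = ENNReal.ofReal (1 - Real.exp (-t)) := by
  rw [expMeasure, gammaMeasure, withDensity_apply _ measurableSet_Iic]
  have h := ProbabilityTheory.lintegral_exponentialPDF_eq_antiDeriv one_pos t
  simp only [one_mul, if_pos ht] at h
  rw [show (gammaPDF 1 1 : ℝ → ℝ≥0∞) = exponentialPDF 1 from rfl] at *
  rw [h]

lemma myExp_Ioi {t : ℝ} (ht : 0 ≤ t) :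
    expMeasure 1 (Set.Ioi t) = ENNReal.ofReal (Real.exp (-t)) := by
  have hP : IsProbabilityMeasure (expMeasure 1) := isProbabilityMeasure_expMeasure one_pos
  have : Set.Ioi t = (Set.Iic t)ᶜ := (Set.compl_Iic ..).symm
  rw [this, measure_compl measurableSet_Iic (measure_ne_top _ _), measure_univ, myExp_Iic ht,
    ← ENNReal.ofReal_one, ← ENNReal.ofReal_sub _ (by simp [Real.exp_le_one_iff]; linarith)]
  norm_num

lemma my_one_sub_exp {b : ℝ} (h0 : 0 ≤ b) (h1 : b ≤ 1) : b / 2 ≤ 1 - Real.exp (-b) := by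
  rw [Real.exp_neg]
  have h2 := Real.add_one_le_exp b
  have h4 : (Real.exp b)⁻¹ ≤ (1 + b)⁻¹ := inv_anti₀ (by linarith) (by linarith)
  have h5 : 1 - (1 + b)⁻¹ = b / (1 + b) := by field_simp; ring
  have h6 : b / 2 ≤ b / (1 + b) := by
    rw [div_le_div_iff₀ (by norm_num) (by linarith)]
    nlinarith
  linarith

set_option maxHeartbeats 1000000 in
/-- Outage exponent of decoding the interferer while treating the intended signal as
noise, under very strong interference `α ≥ 2`:
`P[ρ^α Y < (ρ^r − 1)(1 + ρX)] ≐ ρ^{-(α−1−r)}`. -/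
theorem stmt_1 {Ω : Type*} [MeasurableSpace Ω] (P : Measure Ω) [IsProbabilityMeasure P]
    (X Y : Ω → ℝ) (hXm : Measurable X) (hYm : Measurable Y)
    (hX : Measure.map X P = expMeasure 1) (hY : Measure.map Y P = expMeasure 1)
    (hindep : IndepFun X Y P)
    (α r : ℝ) (hα : 2 ≤ α) (hr0 : 0 < r) (hr1 : r ≤ 1) :
    Tendsto (fun ρ : ℝ =>
        Real.log (P {ω | ρ ^ α * Y ω < (ρ ^ r - 1) * (1 + ρ * X ω)}).toReal / Real.log ρ)
      atTop (nhds (-(α - 1 - r))) := by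
  have hLeq : -(α - 1 - r) = (r + 1 - α) := by ring
  rw [hLeq]
  set L : ℝ := r + 1 - α with hLdef
  set C₁ : ℝ := Real.exp (-1) / 4 with hC₁
  have hC₁pos : 0 < C₁ := by rw [hC₁]; positivity
  -- the key eventual bounds
  have key : ∀ᶠ ρ : ℝ in atTop,
      (L + Real.log C₁ / Real.log ρ ≤
        Real.log (P {ω | ρ ^ α * Y ω < (ρ ^ r - 1) * (1 + ρ * X ω)}).toReal / Real.log ρ ∧
      Real.log (P {ω | ρ ^ α * Y ω < (ρ ^ r - 1) * (1 + ρ * X ω)}).toReal / Real.log ρ ≤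
        L + (Real.log (2 + α) / Real.log ρ + Real.log (Real.log ρ) / Real.log ρ)) := by
    filter_upwards [eventually_ge_atTop (max 3 ((2:ℝ) ^ (1/r)))] with ρ hρ
    have hρ3 : (3:ℝ) ≤ ρ := le_trans (le_max_left _ _) hρ
    have hρ2r : (2:ℝ) ^ (1/r) ≤ ρ := le_trans (le_max_right _ _) hρ
    have hρ1 : (1:ℝ) < ρ := by linarith
    have hρ0 : (0:ℝ) < ρ := by linarith
    have hlog1 : 1 ≤ Real.log ρ := by
      have h1 : Real.exp 1 ≤ ρ := le_trans (by nlinarith [Real.exp_one_lt_d9]) hρ3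
      calc (1:ℝ) = Real.log (Real.exp 1) := (Real.log_exp 1).symm
        _ ≤ Real.log ρ := Real.log_le_log (Real.exp_pos 1) h1
    have hlogpos : 0 < Real.log ρ := by linarith
    have hrpow2 : (2:ℝ) ≤ ρ ^ r := by
      calc (2:ℝ) = ((2:ℝ) ^ (1/r)) ^ r := by
            rw [← Real.rpow_mul (by norm_num : (0:ℝ) ≤ 2)]
            rw [show (1/r) * r = 1 by field_simp]
            norm_num
        _ ≤ ρ ^ r := Real.rpow_le_rpow (by positivity) hρ2r hr0.le
    have hρα : 0 < ρ ^ α := Real.rpow_pos_of_pos hρ0 α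
    have hρL : 0 < ρ ^ L := Real.rpow_pos_of_pos hρ0 L
    have hLval : ρ ^ L = ρ ^ r * ρ / ρ ^ α := by
      rw [hLdef, show r + 1 - α = (r + 1) + (-α) by ring, Real.rpow_add hρ0,
        Real.rpow_add hρ0, Real.rpow_one, Real.rpow_neg hρ0.le, div_eq_mul_inv]
    have hLneg : L ≤ 0 := by rw [hLdef]; linarith
    obtain ⟨c, hc⟩ : ∃ c : ℝ, c = ρ ^ r - 1 := ⟨_, rfl⟩
    rw [← hc]
    have hc0 : 0 < c := by rw [hc]; linarith
    have hcle : c ≤ ρ ^ r := by rw [hc]; linarith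
    have hchalf : ρ ^ r / 2 ≤ c := by rw [hc]; linarith
    obtain ⟨b, hb⟩ : ∃ b : ℝ, b = c * ρ / ρ ^ α := ⟨_, rfl⟩
    have hb0 : 0 < b := by rw [hb]; exact div_pos (mul_pos hc0 hρ0) hρα
    have hbL : ρ ^ L / 2 ≤ b := by
      rw [hb]
      calc ρ ^ L / 2 = (ρ ^ r / 2 * ρ) / ρ ^ α := by rw [hLval]; ring
        _ ≤ c * ρ / ρ ^ α := by
            rw [div_le_div_iff_of_pos_right hρα]
            exact mul_le_mul_of_nonneg_right hchalf hρ0.le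
    have hbupper : b ≤ ρ ^ L := by
      rw [hb, hLval, div_le_div_iff_of_pos_right hρα]
      exact mul_le_mul_of_nonneg_right hcle hρ0.le
    have hb1 : b ≤ 1 :=
      hbupper.trans (Real.rpow_le_one_of_one_le_of_nonpos hρ1.le hLneg)
    -- lower bound on the probability
    have hsub : X ⁻¹' (Set.Ici 1) ∩ Y ⁻¹' (Set.Iic b) ⊆
        {ω | ρ ^ α * Y ω < c * (1 + ρ * X ω)} := by
      rintro ω ⟨hx, hy⟩
      simp only [Set.mem_preimage, Set.mem_Ici, Set.mem_Iic] at hx hy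
      have h1 : ρ ^ α * Y ω ≤ ρ ^ α * b := mul_le_mul_of_nonneg_left hy hρα.le
      have h2 : ρ ^ α * b = c * ρ := by rw [hb]; field_simp
      have h4 : ρ * 1 ≤ ρ * X ω := mul_le_mul_of_nonneg_left hx hρ0.le
      have h3 : c * ρ < c * (1 + ρ * X ω) := (mul_lt_mul_iff_right₀ hc0).2 (by linarith)
      show ρ ^ α * Y ω < c * (1 + ρ * X ω)
      linarith [h2 ▸ h1]
    have hmapXIoi : P (X ⁻¹' Set.Ioi 1) = ENNReal.ofReal (Real.exp (-1)) := by
      rw [← Measure.map_apply hXm measurableSet_Ioi, hX, myExp_Ioi zero_le_one]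
    have hmapYIic : P (Y ⁻¹' Set.Iic b) = ENNReal.ofReal (1 - Real.exp (-b)) := by
      rw [← Measure.map_apply hYm measurableSet_Iic, hY, myExp_Iic hb0.le]
    have hlowP : ENNReal.ofReal (Real.exp (-1)) * ENNReal.ofReal (b / 2) ≤
        P {ω | ρ ^ α * Y ω < c * (1 + ρ * X ω)} := by
      have hind := hindep.measure_inter_preimage_eq_mul (Set.Ici 1) (Set.Iic b)
        measurableSet_Ici measurableSet_Iic
      calc ENNReal.ofReal (Real.exp (-1)) * ENNReal.ofReal (b / 2)
          ≤ P (X ⁻¹' Set.Ici 1) * P (Y ⁻¹' Set.Iic b) := by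
            gcongr
            · rw [← hmapXIoi]; exact measure_mono (Set.preimage_mono Set.Ioi_subset_Ici_self)
            · rw [hmapYIic]; exact ENNReal.ofReal_le_ofReal (my_one_sub_exp hb0.le hb1)
        _ = P (X ⁻¹' Set.Ici 1 ∩ Y ⁻¹' Set.Iic b) := hind.symm
        _ ≤ P {ω | ρ ^ α * Y ω < c * (1 + ρ * X ω)} := measure_mono hsub
    have hlow : Real.exp (-1) * (b / 2) ≤
        (P {ω | ρ ^ α * Y ω < c * (1 + ρ * X ω)}).toReal := by
      have h := ENNReal.toReal_mono (measure_ne_top P _) hlowP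
      rwa [ENNReal.toReal_mul, ENNReal.toReal_ofReal (Real.exp_pos _).le,
        ENNReal.toReal_ofReal (by linarith)] at h
    have hlow2 : C₁ * ρ ^ L ≤ (P {ω | ρ ^ α * Y ω < c * (1 + ρ * X ω)}).toReal := by
      refine le_trans ?_ hlow
      have h := mul_le_mul_of_nonneg_left hbL (Real.exp_pos (-1)).le
      rw [hC₁]; linarith
    -- upper bound on the probability
    obtain ⟨t, ht⟩ : ∃ t : ℝ, t = α * Real.log ρ := ⟨_, rfl⟩
    have ht0 : 0 < t := by rw [ht]; exact mul_pos (by linarith) hlogpos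
    obtain ⟨s, hs⟩ : ∃ s : ℝ, s = c * (1 + ρ * t) / ρ ^ α := ⟨_, rfl⟩
    have hs0 : 0 ≤ s := by
      rw [hs]; exact div_nonneg (mul_nonneg hc0.le (by nlinarith)) hρα.le
    have hsubU : {ω | ρ ^ α * Y ω < c * (1 + ρ * X ω)} ⊆
        X ⁻¹' (Set.Ioi t) ∪ Y ⁻¹' (Set.Iic s) := by
      intro ω hω
      simp only [Set.mem_setOf_eq] at hω
      by_cases hx : t < X ω
      · exact Or.inl hx
      · push_neg at hx
        refine Or.inr ?_
        show Y ω ≤ s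
        have h0 : ρ * X ω ≤ ρ * t := mul_le_mul_of_nonneg_left hx hρ0.le
        have h1 : ρ ^ α * Y ω < c * (1 + ρ * t) :=
          lt_of_lt_of_le hω (mul_le_mul_of_nonneg_left (by linarith) hc0.le)
        rw [hs, le_div_iff₀ hρα]
        linarith [mul_comm (Y ω) (ρ ^ α)]
    have hmapXIoit : P (X ⁻¹' Set.Ioi t) = ENNReal.ofReal (Real.exp (-t)) := by
      rw [← Measure.map_apply hXm measurableSet_Ioi, hX, myExp_Ioi ht0.le]
    have hmapYIics : P (Y ⁻¹' Set.Iic s) = ENNReal.ofReal (1 - Real.exp (-s)) := by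
      rw [← Measure.map_apply hYm measurableSet_Iic, hY, myExp_Iic hs0]
    have hupP : P {ω | ρ ^ α * Y ω < c * (1 + ρ * X ω)} ≤
        ENNReal.ofReal (Real.exp (-t)) + ENNReal.ofReal (1 - Real.exp (-s)) := by
      calc P {ω | ρ ^ α * Y ω < c * (1 + ρ * X ω)}
          ≤ P (X ⁻¹' Set.Ioi t ∪ Y ⁻¹' Set.Iic s) := measure_mono hsubU
        _ ≤ P (X ⁻¹' Set.Ioi t) + P (Y ⁻¹' Set.Iic s) := measure_union_le _ _
        _ = _ := by rw [hmapXIoit, hmapYIics]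
    have hup1 : (P {ω | ρ ^ α * Y ω < c * (1 + ρ * X ω)}).toReal ≤
        Real.exp (-t) + (1 - Real.exp (-s)) := by
      have h := ENNReal.toReal_mono (by finiteness) hupP
      rwa [ENNReal.toReal_add ENNReal.ofReal_ne_top ENNReal.ofReal_ne_top,
        ENNReal.toReal_ofReal (Real.exp_pos _).le,
        ENNReal.toReal_ofReal (by simp [Real.exp_le_one_iff]; linarith)] at h
    have hexp_t : Real.exp (-t) = ρ ^ (-α) := by
      rw [Real.rpow_def_of_pos hρ0, ht]; ring_nf
    have h1s : 1 - Real.exp (-s) ≤ s := by linarith [Real.add_one_le_exp (-s)]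
    have h1ρt : 1 + ρ * t ≤ (1 + α) * ρ * Real.log ρ := by
      have h := mul_le_mul_of_nonneg_left hlog1 hρ0.le
      rw [ht]; nlinarith
    have hsle : s ≤ (1 + α) * Real.log ρ * ρ ^ L := by
      rw [hs]
      calc c * (1 + ρ * t) / ρ ^ α ≤ ρ ^ r * ((1 + α) * ρ * Real.log ρ) / ρ ^ α := by
            rw [div_le_div_iff_of_pos_right hρα]
            exact mul_le_mul hcle h1ρt (by nlinarith) (by positivity)
        _ = (1 + α) * Real.log ρ * ρ ^ L := by rw [hLval]; ring
    have hρnegα : ρ ^ (-α) ≤ ρ ^ L :=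
      Real.rpow_le_rpow_of_exponent_le hρ1.le (by rw [hLdef]; linarith)
    have hup2 : (P {ω | ρ ^ α * Y ω < c * (1 + ρ * X ω)}).toReal ≤
        (2 + α) * Real.log ρ * ρ ^ L := by
      have h := mul_le_mul_of_nonneg_right hlog1 hρL.le
      nlinarith [hup1, hexp_t, h1s, hsle, hρnegα]
    -- put it together
    obtain ⟨p, hp⟩ : ∃ p : ℝ, p = (P {ω | ρ ^ α * Y ω < c * (1 + ρ * X ω)}).toReal := ⟨_, rfl⟩
    rw [← hp] at hlow2 hup2 ⊢
    have hppos : 0 < p := lt_of_lt_of_le (mul_pos hC₁pos hρL) hlow2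
    constructor
    · have h1 : Real.log (C₁ * ρ ^ L) ≤ Real.log p :=
        Real.log_le_log (mul_pos hC₁pos hρL) hlow2
      rw [Real.log_mul hC₁pos.ne' hρL.ne', Real.log_rpow hρ0] at h1
      have h2 : (Real.log C₁ + L * Real.log ρ) / Real.log ρ ≤ Real.log p / Real.log ρ := by
        rw [div_le_div_iff_of_pos_right hlogpos]; exact h1
      have h3 : (Real.log C₁ + L * Real.log ρ) / Real.log ρ =
          L + Real.log C₁ / Real.log ρ := by field_simp; ring
      linarith [h3 ▸ h2]
    · have h1 : Real.log p ≤ Real.log ((2 + α) * Real.log ρ * ρ ^ L) :=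
        Real.log_le_log hppos hup2
      rw [Real.log_mul (by positivity) hρL.ne', Real.log_mul (by positivity) hlogpos.ne',
        Real.log_rpow hρ0] at h1
      have h2 : Real.log p / Real.log ρ ≤
          (Real.log (2 + α) + Real.log (Real.log ρ) + L * Real.log ρ) / Real.log ρ := by
        rw [div_le_div_iff_of_pos_right hlogpos]; exact h1
      have h3 : (Real.log (2 + α) + Real.log (Real.log ρ) + L * Real.log ρ) / Real.log ρ =
          L + (Real.log (2 + α) / Real.log ρ + Real.log (Real.log ρ) / Real.log ρ) := by
        field_simp; ring
      linarith [h3 ▸ h2]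
  -- squeeze
  have hinv : Tendsto (fun ρ : ℝ => (Real.log ρ)⁻¹) atTop (nhds 0) :=
    Real.tendsto_log_atTop.inv_tendsto_atTop
  have hlowT : Tendsto (fun ρ : ℝ => L + Real.log C₁ / Real.log ρ) atTop (nhds L) := by
    have h0 : Tendsto (fun ρ : ℝ => Real.log C₁ / Real.log ρ) atTop (nhds 0) := by
      simpa [div_eq_mul_inv] using hinv.const_mul (Real.log C₁)
    simpa using tendsto_const_nhds.add h0
  have hupT : Tendsto (fun ρ : ℝ =>
      L + (Real.log (2 + α) / Real.log ρ + Real.log (Real.log ρ) / Real.log ρ))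
      atTop (nhds L) := by
    have h0 : Tendsto (fun ρ : ℝ => Real.log (2 + α) / Real.log ρ) atTop (nhds 0) := by
      simpa [div_eq_mul_inv] using hinv.const_mul (Real.log (2 + α))
    have h1 : Tendsto (fun ρ : ℝ => Real.log (Real.log ρ) / Real.log ρ) atTop (nhds 0) := by
      have := (Real.isLittleO_log_id_atTop.tendsto_div_nhds_zero).comp Real.tendsto_log_atTop
      simpa [Function.comp_def] using this
    simpa using tendsto_const_nhds.add (h0.add h1)
  exact tendsto_of_tendsto_of_tendsto_of_le_of_le' hlowT hupT
    (key.mono fun ρ h => h.1) (key.mono fun ρ h => h.2)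
end

section
/- Let X and Y be independent rate-1 exponential random variables and let a ≥ 0, b ≥ 0, r > 0 be real numbers. Then lim_{ρ→∞} log P[ρ^a X < (ρ^r − 1)(1 + ρ^b Y)] / log ρ = −(a − b − r)^+. (General form of the outage exponent for decoding one signal, received at power ρ^a, over a fading channel while treating another signal, received at power ρ^b, as noise, at multiplexing rate r; it underlies the outage exponents appearing in Theorems 1 and 2.) -/
open MeasureTheory ProbabilityTheory Filter Real

lemma expMeasure_Iio_eq (t : ℝ) (ht : 0 ≤ t) :
    expMeasure 1 (Set.Iio t) = ENNReal.ofReal (1 - rexp (-t)) := by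
  have hsing : expMeasure 1 ({t} : Set ℝ) = 0 := by
    rw [expMeasure, gammaMeasure, withDensity_apply _ (measurableSet_singleton t),
      Measure.restrict_singleton, Real.volume_singleton]
    simp
  have h1 : expMeasure 1 (Set.Iio t) = expMeasure 1 (Set.Iic t) := by
    rw [← Set.Iic_diff_right, measure_diff_null hsing]
  have h2 : expMeasure 1 (Set.Iic t) = ∫⁻ y in Set.Iic t, exponentialPDF 1 y := by
    rw [expMeasure, gammaMeasure, withDensity_apply _ measurableSet_Iic]
    rfl
  rw [h1, h2, lintegral_exponentialPDF_eq_antiDeriv one_pos t, if_pos ht, one_mul]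

lemma expMeasure_Ici_eq (t : ℝ) (ht : 0 ≤ t) :
    expMeasure 1 (Set.Ici t) = ENNReal.ofReal (rexp (-t)) := by
  have : IsProbabilityMeasure (expMeasure 1) := isProbabilityMeasure_expMeasure one_pos
  rw [← Set.compl_Iio, prob_compl_eq_one_sub measurableSet_Iio, expMeasure_Iio_eq t ht,
    ← ENNReal.ofReal_one,
    ← ENNReal.ofReal_sub _ (by nlinarith [Real.exp_le_one_iff.2 (by linarith : -t ≤ 0)])]
  norm_num

lemma half_le_one_sub_exp_neg {w : ℝ} (h0 : 0 ≤ w) (h1 : w ≤ 1) : w / 2 ≤ 1 - rexp (-w) := by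
  have h2 : rexp (-w) ≤ 1 / (1 + w) := by
    rw [Real.exp_neg, inv_eq_one_div]
    exact one_div_le_one_div_of_le (by linarith) (by linarith [Real.add_one_le_exp w])
  have h4 : 1 / (1 + w) ≤ 1 - w / 2 := by
    rw [div_le_iff₀ (by linarith)]
    nlinarith
  linarith

lemma aux_loglog {a : ℝ} (ha : 0 < a) :
    Tendsto (fun ρ : ℝ => Real.log (2 + a * Real.log ρ) / Real.log ρ) atTop (nhds 0) := by
  have h0 : Tendsto (fun t : ℝ => Real.log (2 + a * t) / t) atTop (nhds 0) := by
    have hub : Tendsto (fun t : ℝ => Real.log (2 + a) / t + Real.log t / t) atTop (nhds 0) := by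
      have := (Tendsto.div_atTop (tendsto_const_nhds (x := Real.log (2 + a))) tendsto_id).add
        Real.isLittleO_log_id_atTop.tendsto_div_nhds_zero
      simpa using this
    refine tendsto_of_tendsto_of_tendsto_of_le_of_le' tendsto_const_nhds hub ?_ ?_
    · filter_upwards [eventually_ge_atTop (1:ℝ)] with t ht
      have ht0 : (0:ℝ) < t := by linarith
      have h2 : (1:ℝ) ≤ 2 + a * t := by nlinarith
      have h3 : 0 ≤ Real.log (2 + a * t) := Real.log_nonneg h2
      positivity
    · filter_upwards [eventually_ge_atTop (1:ℝ)] with t ht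
      have ht0 : (0:ℝ) < t := by linarith
      have h2 : (0:ℝ) < 2 + a * t := by nlinarith
      have h3 : 2 + a * t ≤ (2 + a) * t := by nlinarith
      have h4 : Real.log (2 + a * t) ≤ Real.log (2 + a) + Real.log t := by
        rw [← Real.log_mul (by linarith) (by linarith)]
        exact Real.log_le_log h2 h3
      rw [← add_div]
      exact (div_le_div_iff_of_pos_right ht0).mpr h4
  exact h0.comp Real.tendsto_log_atTop

set_option maxHeartbeats 1000000 in
/-- General outage exponent for decoding a signal received at power `ρ^a` while
treating a signal received at power `ρ^b` as noise, at multiplexing rate `r`: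
`P[ρ^a X < (ρ^r − 1)(1 + ρ^b Y)] ≐ ρ^{-(a−b−r)^+}`. -/
theorem stmt_2 {Ω : Type*} [MeasurableSpace Ω] (P : Measure Ω) [IsProbabilityMeasure P]
    (X Y : Ω → ℝ) (hXm : Measurable X) (hYm : Measurable Y)
    (hX : Measure.map X P = expMeasure 1) (hY : Measure.map Y P = expMeasure 1)
    (hindep : IndepFun X Y P)
    (a b r : ℝ) (ha : 0 ≤ a) (hb : 0 ≤ b) (hr : 0 < r) :
    Tendsto (fun ρ : ℝ =>
        Real.log (P {ω | ρ ^ a * X ω < (ρ ^ r - 1) * (1 + ρ ^ b * Y ω)}).toReal / Real.log ρ)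
      atTop (nhds (-max (a - b - r) 0)) := by
  have hXlt : ∀ t : ℝ, 0 ≤ t → P {ω | X ω < t} = ENNReal.ofReal (1 - rexp (-t)) := by
    intro t ht
    have h1 : {ω | X ω < t} = X ⁻¹' Set.Iio t := rfl
    rw [h1, ← Measure.map_apply hXm measurableSet_Iio, hX, expMeasure_Iio_eq t ht]
  have hYge : ∀ t : ℝ, 0 ≤ t → P {ω | t ≤ Y ω} = ENNReal.ofReal (rexp (-t)) := by
    intro t ht
    have h1 : {ω | t ≤ Y ω} = Y ⁻¹' Set.Ici t := rfl
    rw [h1, ← Measure.map_apply hYm measurableSet_Ici, hY, expMeasure_Ici_eq t ht]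
  have key_lower : ∀ (ρ s t : ℝ), 0 ≤ s → 0 ≤ t →
      ({ω | X ω < s} ∩ {ω | t ≤ Y ω} ⊆
        {ω | ρ ^ a * X ω < (ρ ^ r - 1) * (1 + ρ ^ b * Y ω)}) →
      (1 - rexp (-s)) * rexp (-t) ≤
        (P {ω | ρ ^ a * X ω < (ρ ^ r - 1) * (1 + ρ ^ b * Y ω)}).toReal := by
    intro ρ s t hs ht hsub
    have hval : P ({ω | X ω < s} ∩ {ω | t ≤ Y ω})
        = ENNReal.ofReal ((1 - rexp (-s)) * rexp (-t)) := by
      have h1 : {ω | X ω < s} = X ⁻¹' Set.Iio s := rfl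
      have h2 : {ω | t ≤ Y ω} = Y ⁻¹' Set.Ici t := rfl
      rw [h1, h2, hindep.measure_inter_preimage_eq_mul _ _ measurableSet_Iio measurableSet_Ici,
        ← h1, ← h2, hXlt s hs, hYge t ht,
        ← ENNReal.ofReal_mul (by nlinarith [Real.exp_le_one_iff.2 (by linarith : -s ≤ 0)])]
    have hmono := ENNReal.toReal_mono (measure_ne_top P _) (measure_mono (μ := P) hsub)
    rw [hval, ENNReal.toReal_ofReal
      (mul_nonneg (by nlinarith [Real.exp_le_one_iff.2 (by linarith : -s ≤ 0)])
        (Real.exp_nonneg _))] at hmono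
    exact hmono
  have key_upper : ∀ (ρ s t : ℝ), 0 ≤ s → 0 ≤ t →
      ({ω | ρ ^ a * X ω < (ρ ^ r - 1) * (1 + ρ ^ b * Y ω)} ⊆
        {ω | X ω < s} ∪ {ω | t ≤ Y ω}) →
      (P {ω | ρ ^ a * X ω < (ρ ^ r - 1) * (1 + ρ ^ b * Y ω)}).toReal
        ≤ (1 - rexp (-s)) + rexp (-t) := by
    intro ρ s t hs ht hsub
    have h1 := (measure_mono (μ := P) hsub).trans (measure_union_le _ _)
    rw [hXlt s hs, hYge t ht] at h1
    have h2 := ENNReal.toReal_mono (by finiteness) h1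
    rw [ENNReal.toReal_add (by finiteness) (by finiteness),
      ENNReal.toReal_ofReal (by nlinarith [Real.exp_le_one_iff.2 (by linarith : -s ≤ 0)]),
      ENNReal.toReal_ofReal (Real.exp_nonneg _)] at h2
    exact h2
  have hPrle1 : ∀ ρ : ℝ,
      (P {ω | ρ ^ a * X ω < (ρ ^ r - 1) * (1 + ρ ^ b * Y ω)}).toReal ≤ 1 := by
    intro ρ
    simpa using ENNReal.toReal_mono (by simp)
      (prob_le_one (μ := P) (s := {ω | ρ ^ a * X ω < (ρ ^ r - 1) * (1 + ρ ^ b * Y ω)}))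
  rcases le_or_gt a (b + r) with hab | hab
  · -- the exponent is 0
    have hmax : -max (a - b - r) 0 = 0 := by rw [max_eq_right (by linarith)]; ring
    rw [hmax]
    set c0 : ℝ := (1 - rexp (-1)) * rexp (-2) with hc0
    have hc0pos : 0 < c0 := by
      have h1 := Real.exp_lt_one_iff.2 (by norm_num : (-1:ℝ) < 0)
      have h2 := Real.exp_pos (-2:ℝ)
      nlinarith
    refine tendsto_of_tendsto_of_tendsto_of_le_of_le'
      (g := fun ρ : ℝ => Real.log c0 / Real.log ρ) (h := fun _ => (0:ℝ))
      (Tendsto.div_atTop tendsto_const_nhds Real.tendsto_log_atTop) tendsto_const_nhds ?_ ?_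
    · filter_upwards [eventually_gt_atTop (1:ℝ),
        (tendsto_rpow_atTop hr).eventually_ge_atTop (2:ℝ)] with ρ hρ1 hρr
      have hρ0 : (0:ℝ) < ρ := by linarith
      have hA : (0:ℝ) < ρ ^ a := Real.rpow_pos_of_pos hρ0 a
      have hB0 : (0:ℝ) < ρ ^ b := Real.rpow_pos_of_pos hρ0 b
      have hB1 : (1:ℝ) ≤ ρ ^ b := Real.one_le_rpow hρ1.le hb
      have hAle : ρ ^ a ≤ ρ ^ b * ρ ^ r := by
        rw [← Real.rpow_add hρ0]
        exact Real.rpow_le_rpow_of_exponent_le hρ1.le (by linarith)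
      have hsub : {ω | X ω < 1} ∩ {ω | (2:ℝ) ≤ Y ω} ⊆
          {ω | ρ ^ a * X ω < (ρ ^ r - 1) * (1 + ρ ^ b * Y ω)} := by
        rintro ω ⟨hx, hy⟩
        simp only [Set.mem_setOf_eq] at hx hy ⊢
        nlinarith [mul_lt_mul_of_pos_left hx hA, mul_le_mul_of_nonneg_left hy hB0.le]
      have hlb := key_lower ρ 1 2 zero_le_one (by norm_num) hsub
      have hlogρ : 0 < Real.log ρ := Real.log_pos hρ1
      exact (div_le_div_iff_of_pos_right hlogρ).mpr (Real.log_le_log hc0pos hlb)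
    · filter_upwards [eventually_gt_atTop (1:ℝ)] with ρ hρ1
      have hlogρ : 0 < Real.log ρ := Real.log_pos hρ1
      exact div_nonpos_iff.mpr (Or.inr ⟨Real.log_nonpos ENNReal.toReal_nonneg (hPrle1 ρ), hlogρ.le⟩)
  · -- the exponent is a - b - r > 0
    have hmax : -max (a - b - r) 0 = b + r - a := by rw [max_eq_left (by linarith)]; ring
    rw [hmax]
    set c : ℝ := b + r - a with hc
    have hcneg : c < 0 := by rw [hc]; linarith
    have ha0 : 0 < a := by linarith
    set c1 : ℝ := rexp (-1) / 4 with hc1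
    have hc1pos : 0 < c1 := by positivity
    have hrneg : Tendsto (fun ρ : ℝ => (2:ℝ) * ρ ^ c) atTop (nhds 0) := by
      have := (tendsto_rpow_neg_atTop (by linarith : 0 < -c)).const_mul (2:ℝ)
      simpa using this
    have hbounds : ∀ᶠ ρ : ℝ in atTop, 0 < ρ ∧ 0 < Real.log ρ ∧ 0 < ρ ^ c ∧
        c1 * ρ ^ c ≤ (P {ω | ρ ^ a * X ω < (ρ ^ r - 1) * (1 + ρ ^ b * Y ω)}).toReal ∧
        (P {ω | ρ ^ a * X ω < (ρ ^ r - 1) * (1 + ρ ^ b * Y ω)}).toReal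
          ≤ ρ ^ c * (2 + a * Real.log ρ) := by
      filter_upwards [eventually_gt_atTop (1:ℝ),
        (tendsto_rpow_atTop hr).eventually_ge_atTop (2:ℝ),
        hrneg.eventually (eventually_le_nhds (by norm_num : (0:ℝ) < 1))] with ρ hρ1 hρr hsm
      have hρ0 : (0:ℝ) < ρ := by linarith
      have hA : (0:ℝ) < ρ ^ a := Real.rpow_pos_of_pos hρ0 a
      have hB0 : (0:ℝ) < ρ ^ b := Real.rpow_pos_of_pos hρ0 b
      have hB1 : (1:ℝ) ≤ ρ ^ b := Real.one_le_rpow hρ1.le hb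
      have hR1 : (1:ℝ) ≤ ρ ^ r := Real.one_le_rpow hρ1.le hr.le
      have hC0 : (0:ℝ) < ρ ^ c := Real.rpow_pos_of_pos hρ0 c
      have hlogρ : 0 < Real.log ρ := Real.log_pos hρ1
      have hcval : ρ ^ c = ρ ^ r * ρ ^ b / ρ ^ a := by
        rw [hc, show b + r - a = r + b - a by ring, Real.rpow_sub hρ0, Real.rpow_add hρ0]
      refine ⟨hρ0, hlogρ, hC0, ?_, ?_⟩
      · -- lower bound
        obtain ⟨w, hw⟩ : ∃ w : ℝ, w = (ρ ^ r - 1) * (1 + ρ ^ b) / ρ ^ a := ⟨_, rfl⟩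
        have hw0 : 0 ≤ w := by
          rw [hw]
          exact div_nonneg (mul_nonneg (by linarith) (by linarith)) hA.le
        have hwle : w ≤ 2 * ρ ^ c := by
          rw [hw, div_le_iff₀ hA]
          have expand : 2 * ρ ^ c * ρ ^ a = 2 * (ρ ^ r * ρ ^ b) := by
            rw [hcval]; field_simp <;> ring
          rw [expand]
          nlinarith
        have hwge : ρ ^ c / 2 ≤ w := by
          rw [hw, le_div_iff₀ hA]
          have expand : ρ ^ c / 2 * ρ ^ a = ρ ^ r * ρ ^ b / 2 := by
            rw [hcval]; field_simp <;> ring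
          rw [expand]
          nlinarith
        have hw1 : w ≤ 1 := le_trans hwle hsm
        have hsub : {ω | X ω < w} ∩ {ω | (1:ℝ) ≤ Y ω} ⊆
            {ω | ρ ^ a * X ω < (ρ ^ r - 1) * (1 + ρ ^ b * Y ω)} := by
          rintro ω ⟨hx, hy⟩
          simp only [Set.mem_setOf_eq] at hx hy ⊢
          have e1 : ρ ^ a * w = (ρ ^ r - 1) * (1 + ρ ^ b) := by
            rw [hw]; field_simp
          nlinarith [mul_lt_mul_of_pos_left hx hA, mul_le_mul_of_nonneg_left hy hB0.le]
        have hlb := key_lower ρ w 1 hw0 zero_le_one hsub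
        have h5 := half_le_one_sub_exp_neg hw0 hw1
        have h6 := Real.exp_pos (-1:ℝ)
        rw [hc1]
        nlinarith
      · -- upper bound
        obtain ⟨M, hM⟩ : ∃ M : ℝ, M = a * Real.log ρ := ⟨_, rfl⟩
        have hM0 : 0 ≤ M := by rw [hM]; positivity
        obtain ⟨s, hs⟩ : ∃ s : ℝ, s = (ρ ^ r - 1) * (1 + ρ ^ b * M) / ρ ^ a := ⟨_, rfl⟩
        have hs0 : 0 ≤ s := by
          rw [hs]
          exact div_nonneg (mul_nonneg (by linarith) (by nlinarith [mul_nonneg hB0.le hM0])) hA.le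
        have hsub : {ω | ρ ^ a * X ω < (ρ ^ r - 1) * (1 + ρ ^ b * Y ω)} ⊆
            {ω | X ω < s} ∪ {ω | M ≤ Y ω} := by
          intro ω hω
          simp only [Set.mem_setOf_eq, Set.mem_union] at hω ⊢
          rcases le_or_gt M (Y ω) with hy | hy
          · exact Or.inr hy
          · left
            have e2 : (ρ ^ r - 1) * (1 + ρ ^ b * M) = ρ ^ a * s := by
              rw [hs]; field_simp
            have h7 : ρ ^ a * X ω < ρ ^ a * s := by
              rw [← e2]
              nlinarith [mul_le_mul_of_nonneg_left hy.le hB0.le]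
            exact (mul_lt_mul_iff_right₀ hA).mp h7
        have hub := key_upper ρ s M hs0 hM0 hsub
        have hexpM : rexp (-M) = ρ ^ (-a) := by
          rw [Real.rpow_def_of_pos hρ0, hM]; ring_nf
        have hna : ρ ^ (-a : ℝ) ≤ ρ ^ c :=
          Real.rpow_le_rpow_of_exponent_le hρ1.le (by rw [hc]; linarith)
        have hra : ρ ^ (r - a : ℝ) ≤ ρ ^ c :=
          Real.rpow_le_rpow_of_exponent_le hρ1.le (by rw [hc]; linarith)
        have hsle : s ≤ ρ ^ (r - a : ℝ) + ρ ^ c * M := by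
          rw [hs, div_le_iff₀ hA]
          have expand : (ρ ^ (r - a : ℝ) + ρ ^ c * M) * ρ ^ a
              = ρ ^ r + ρ ^ r * ρ ^ b * M := by
            rw [hcval, Real.rpow_sub hρ0]; field_simp <;> ring
          rw [expand]
          nlinarith
        have h8 : 1 - rexp (-s) ≤ s := by
          have := Real.add_one_le_exp (-s); linarith
        have h9 : rexp (-M) ≤ ρ ^ c := by rw [hexpM]; exact hna
        rw [← hM]
        nlinarith [hub, hsle, h8, h9, hra, hM0, hC0]
    have hlow : Tendsto (fun ρ : ℝ => Real.log c1 / Real.log ρ + c) atTop (nhds c) := by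
      have := (Tendsto.div_atTop (tendsto_const_nhds (x := Real.log c1))
        Real.tendsto_log_atTop).add (tendsto_const_nhds (x := c))
      simpa using this
    have hhigh : Tendsto (fun ρ : ℝ => c + Real.log (2 + a * Real.log ρ) / Real.log ρ)
        atTop (nhds c) := by
      have := (tendsto_const_nhds (x := c)).add (aux_loglog ha0)
      simpa using this
    refine tendsto_of_tendsto_of_tendsto_of_le_of_le' hlow hhigh ?_ ?_
    · filter_upwards [hbounds] with ρ ⟨hρ0, hlogρ, hC0, hPl, hPu⟩
      have hPrpos : 0 < (P {ω | ρ ^ a * X ω < (ρ ^ r - 1) * (1 + ρ ^ b * Y ω)}).toReal :=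
        lt_of_lt_of_le (by positivity) hPl
      have h1 : Real.log c1 + c * Real.log ρ
          ≤ Real.log (P {ω | ρ ^ a * X ω < (ρ ^ r - 1) * (1 + ρ ^ b * Y ω)}).toReal := by
        have := Real.log_le_log (by positivity) hPl
        rwa [Real.log_mul hc1pos.ne' hC0.ne',
          Real.log_rpow hρ0] at this
      have h2 : Real.log c1 / Real.log ρ + c
          = (Real.log c1 + c * Real.log ρ) / Real.log ρ := by
        field_simp
      rw [h2]
      exact (div_le_div_iff_of_pos_right hlogρ).mpr h1
    · filter_upwards [hbounds] with ρ ⟨hρ0, hlogρ, hC0, hPl, hPu⟩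
      have hPrpos : 0 < (P {ω | ρ ^ a * X ω < (ρ ^ r - 1) * (1 + ρ ^ b * Y ω)}).toReal :=
        lt_of_lt_of_le (by positivity) hPl
      have hM0 : 0 ≤ a * Real.log ρ := by positivity
      have h1 : Real.log (P {ω | ρ ^ a * X ω < (ρ ^ r - 1) * (1 + ρ ^ b * Y ω)}).toReal
          ≤ c * Real.log ρ + Real.log (2 + a * Real.log ρ) := by
        have := Real.log_le_log hPrpos hPu
        rwa [Real.log_mul hC0.ne' (by linarith : (2:ℝ) + a * Real.log ρ ≠ 0),
          Real.log_rpow hρ0] at this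
      have h2 : c + Real.log (2 + a * Real.log ρ) / Real.log ρ
          = (c * Real.log ρ + Real.log (2 + a * Real.log ρ)) / Real.log ρ := by
        field_simp
      rw [h2]
      exact (div_le_div_iff_of_pos_right hlogρ).mpr h1
end

section
/- Let X and Y be independent rate-1 exponential random variables, let α ≥ 2, r ∈ (0,1] and ε > 0, and let δ : ℝ → ℝ satisfy δ(ρ) ≥ ρ^{−r+ε} for all sufficiently large ρ. Define g(ρ) = P[ρ^α Y < (ρ^r − 1)(1 + ρX)] + ρ^r · Q(√(ρ^r δ(ρ)/2)). Then limsup_{ρ→∞} log g(ρ)/log ρ ≤ −(α − 1 − r). (This is the bound P(E_21) ⩽̇ P(O_21) ≐ SNR^{−(α−1−r_2)^+} on the average error probability of decoding the interfering transmitter at receiver 1 while treating the intended signal as noise, valid for codebooks of size SNR^{r_2} whose minimum squared distance satisfies |Δx_2|² ⩾̇ SNR^{−r_2+ε}.) -/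
open MeasureTheory ProbabilityTheory Filter Real Set

/-- Tail function of a standard real Gaussian: `Q t = P[Z ≥ t]`, `Z ~ N(0,1)`. -/
noncomputable def gaussQ (t : ℝ) : ℝ := ((gaussianReal 0 1) (Set.Ici t)).toReal

lemma gaussQ_eq (t : ℝ) : gaussQ t = ∫ x in Ici t, gaussianPDFReal 0 1 x := by
  unfold gaussQ
  rw [gaussianReal_apply_eq_integral 0 one_ne_zero,
    ENNReal.toReal_ofReal (setIntegral_nonneg measurableSet_Ici
      fun x _ => gaussianPDFReal_nonneg _ _ _)]

lemma gaussQ_pos (t : ℝ) : 0 < gaussQ t := by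
  rw [gaussQ_eq]
  rw [setIntegral_pos_iff_support_of_nonneg_ae
    (ae_of_all _ fun x => gaussianPDFReal_nonneg _ _ _)
    (integrable_gaussianPDFReal 0 1).integrableOn]
  have hs : Function.support (gaussianPDFReal 0 1) = Set.univ := by
    ext x; simp [Function.mem_support, (gaussianPDFReal_pos 0 1 x one_ne_zero).ne']
  rw [hs, Set.univ_inter, Real.volume_Ici]
  exact ENNReal.zero_lt_top

lemma gaussQ_le_exp {t : ℝ} (ht : 1 ≤ t) : gaussQ t ≤ rexp (-(t ^ 2 / 2)) := by
  have ht0 : 0 < t := lt_of_lt_of_le one_pos ht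
  rw [gaussQ_eq]
  have hint : IntegrableOn (fun x => (√(2 * π))⁻¹ * rexp (t ^ 2 / 2) * rexp (-(t * x))) (Ici t) := by
    rw [integrableOn_Ici_iff_integrableOn_Ioi]
    have := (exp_neg_integrableOn_Ioi t ht0)
    simpa [neg_mul, IntegrableOn] using this.const_mul ((√(2 * π))⁻¹ * rexp (t ^ 2 / 2))
  have hmono : ∫ x in Ici t, gaussianPDFReal 0 1 x
      ≤ ∫ x in Ici t, (√(2 * π))⁻¹ * rexp (t ^ 2 / 2) * rexp (-(t * x)) := by
    refine setIntegral_mono_on (integrable_gaussianPDFReal 0 1).integrableOn hint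
      measurableSet_Ici fun x hx => ?_
    have hx' : t ≤ x := hx
    unfold gaussianPDFReal
    simp only [NNReal.coe_one, mul_one, sub_zero]
    rw [mul_assoc, ← Real.exp_add]
    refine mul_le_mul_of_nonneg_left (Real.exp_le_exp.2 (by nlinarith [sq_nonneg (x - t)]))
      (inv_nonneg.2 (Real.sqrt_nonneg _))
  have hval : ∫ x in Ici t, (√(2 * π))⁻¹ * rexp (t ^ 2 / 2) * rexp (-(t * x))
      = (√(2 * π))⁻¹ * rexp (t ^ 2 / 2) * (t⁻¹ * rexp (-(t * t))) := by
    rw [MeasureTheory.integral_Ici_eq_integral_Ioi, integral_const_mul]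
    congr 1
    have := integral_comp_mul_left_Ioi (fun u => rexp (-u)) t ht0
    simp only [smul_eq_mul] at this
    rw [this, integral_exp_neg_Ioi]
  refine hmono.trans ?_
  rw [hval]
  have h1 : (√(2 * π))⁻¹ ≤ 1 := by
    rw [inv_le_one_iff₀]
    right
    rw [show (1:ℝ) = √1 by simp]
    exact Real.sqrt_le_sqrt (by nlinarith [Real.pi_gt_three])
  have h2 : t⁻¹ ≤ 1 := by
    rw [inv_le_one_iff₀]; right; exact ht
  have : rexp (t ^ 2 / 2) * rexp (-(t * t)) = rexp (-(t ^ 2 / 2)) := by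
    rw [← Real.exp_add]; ring_nf
  calc (√(2 * π))⁻¹ * rexp (t ^ 2 / 2) * (t⁻¹ * rexp (-(t * t)))
      = ((√(2 * π))⁻¹ * t⁻¹) * (rexp (t ^ 2 / 2) * rexp (-(t * t))) := by ring
    _ ≤ (1 * 1) * rexp (-(t ^ 2 / 2)) := by
        rw [this]
        refine mul_le_mul_of_nonneg_right ?_ (Real.exp_pos _).le
        rw [one_mul]; exact mul_le_one₀ h1 (inv_nonneg.2 ht0.le) h2
    _ = rexp (-(t ^ 2 / 2)) := by ring


lemma expM_Iic (c : ℝ) (hc : 0 ≤ c) : ((expMeasure 1) (Iic c)).toReal = 1 - rexp (-c) := by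
  haveI := isProbabilityMeasure_expMeasure (one_pos (α := ℝ))
  have := cdf_expMeasure_eq (one_pos (α := ℝ)) c
  rw [cdf_eq_real, measureReal_def] at this
  rw [this, if_pos hc, one_mul]

lemma expM_Iio_le (c : ℝ) (hc : 0 ≤ c) : ((expMeasure 1) (Iio c)).toReal ≤ c := by
  haveI := isProbabilityMeasure_expMeasure (one_pos (α := ℝ))
  calc ((expMeasure 1) (Iio c)).toReal
      ≤ ((expMeasure 1) (Iic c)).toReal := by
        exact ENNReal.toReal_mono (measure_ne_top _ _) (measure_mono Iio_subset_Iic_self)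
    _ = 1 - rexp (-c) := expM_Iic c hc
    _ ≤ c := by nlinarith [Real.add_one_le_exp (-c)]

lemma expM_Ioi (T : ℝ) (hT : 0 ≤ T) : ((expMeasure 1) (Ioi T)).toReal = rexp (-T) := by
  haveI := isProbabilityMeasure_expMeasure (one_pos (α := ℝ))
  have h : Ioi T = (Iic T)ᶜ := by simp
  rw [h, prob_compl_eq_one_sub measurableSet_Iic,
    ENNReal.toReal_sub_of_le prob_le_one ENNReal.one_ne_top, ENNReal.toReal_one, expM_Iic T hT]
  ring

lemma ev_rpow_exp (B b s : ℝ) (hb : 0 < b) (hs : 0 < s) :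
    ∀ᶠ ρ : ℝ in atTop, ρ ^ B * rexp (-(b * ρ ^ s)) ≤ 1 / 3 := by
  have h1 : Tendsto (fun x : ℝ => x ^ (B / s) * rexp (-b * x)) atTop (nhds 0) :=
    tendsto_rpow_mul_exp_neg_mul_atTop_nhds_zero (B / s) b hb
  have h2 : Tendsto (fun ρ : ℝ => ρ ^ s) atTop atTop := tendsto_rpow_atTop hs
  have h3 : Tendsto (fun ρ : ℝ => (ρ ^ s) ^ (B / s) * rexp (-b * ρ ^ s)) atTop (nhds 0) :=
    h1.comp h2
  have h4 : Tendsto (fun ρ : ℝ => ρ ^ B * rexp (-(b * ρ ^ s))) atTop (nhds 0) := by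
    refine h3.congr' ?_
    filter_upwards [eventually_gt_atTop (0:ℝ)] with ρ hρ
    rw [← Real.rpow_mul hρ.le]
    rw [neg_mul]
    congr 2
    field_simp
  exact h4.eventually_le_const (by norm_num)




set_option maxHeartbeats 1000000 in
/-- `P(E_21) ⩽̇ SNR^{−(α−1−r)}`: the error probability of decoding the interfering
transmitter while treating the intended signal as noise, upper-bounded by the outage
probability plus the union-bound term, has SNR exponent at most `−(α−1−r)` provided
the codebook minimum distance satisfies `δ(ρ) ≥ ρ^{−r+ε}` eventually. -/
theorem stmt_5 {Ω : Type*} [MeasurableSpace Ω] (P : Measure Ω) [IsProbabilityMeasure P]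
    (X Y : Ω → ℝ) (hXm : Measurable X) (hYm : Measurable Y)
    (hX : Measure.map X P = expMeasure 1) (hY : Measure.map Y P = expMeasure 1)
    (hindep : IndepFun X Y P)
    (α r ε : ℝ) (hα : 2 ≤ α) (hr0 : 0 < r) (hr1 : r ≤ 1) (hε : 0 < ε)
    (δ : ℝ → ℝ) (hδ : ∀ᶠ ρ in atTop, (ρ : ℝ) ^ (-r + ε) ≤ δ ρ)
    (g : ℝ → ℝ)
    (hg : ∀ ρ : ℝ, g ρ =
      (P {ω | ρ ^ α * Y ω < (ρ ^ r - 1) * (1 + ρ * X ω)}).toReal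
        + ρ ^ r * gaussQ (Real.sqrt (ρ ^ r * δ ρ / 2))) :
    Filter.limsup (fun ρ : ℝ => Real.log (g ρ) / Real.log ρ) atTop ≤ -(α - 1 - r) := by
  haveI := isProbabilityMeasure_expMeasure (one_pos (α := ℝ))
  refine le_of_forall_pos_le_add fun η hη => ?_
  have hfin : ∀ᶠ ρ : ℝ in atTop, Real.log (g ρ) / Real.log ρ ≤ -(α - 1 - r) + η := by
    have E1 : ∀ᶠ ρ : ℝ in atTop, (6:ℝ) ≤ ρ ^ (η/2) :=
      (tendsto_rpow_atTop (by positivity)).eventually_ge_atTop 6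
    have E2 := ev_rpow_exp (α - 1 - r - η) 1 (η/2) one_pos (by positivity)
    have E3 := ev_rpow_exp (α - 1 - η) (1/4) ε (by norm_num) hε
    have E5 : ∀ᶠ ρ : ℝ in atTop, (2:ℝ) ≤ ρ ^ ε :=
      (tendsto_rpow_atTop hε).eventually_ge_atTop 2
    filter_upwards [E1, E2, E3, E5, hδ, eventually_ge_atTop (2:ℝ)]
      with ρ h1 h2 h3 h5 hδρ hρ2
    have hρ0 : (0:ℝ) < ρ := by linarith
    have hρ1 : (1:ℝ) < ρ := by linarith
    set T : ℝ := ρ ^ (η/2) with hTdef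
    set c : ℝ := ρ ^ (r - α) * (1 + ρ * T) with hcdef
    have hT1 : (1:ℝ) ≤ T := Real.one_le_rpow hρ1.le (by positivity)
    have hT0 : (0:ℝ) ≤ T := by linarith
    have hc0 : (0:ℝ) ≤ c :=
      mul_nonneg (Real.rpow_pos_of_pos hρ0 (r - α)).le (by nlinarith)
    -- set inclusion
    have hsub : {ω | ρ ^ α * Y ω < (ρ ^ r - 1) * (1 + ρ * X ω)}
        ⊆ Y ⁻¹' Iio c ∪ X ⁻¹' Ioi T := by
      intro ω hω
      simp only [Set.mem_setOf_eq] at hω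
      by_cases hx : X ω ≤ T
      · left
        have hρr1 : (1:ℝ) ≤ ρ ^ r := Real.one_le_rpow hρ1.le hr0.le
        have hmx : ρ * X ω ≤ ρ * T := mul_le_mul_of_nonneg_left hx hρ0.le
        have hb : (ρ ^ r - 1) * (1 + ρ * X ω) ≤ ρ ^ r * (1 + ρ * T) := by nlinarith
        have hρα : (0:ℝ) < ρ ^ α := Real.rpow_pos_of_pos hρ0 α
        have hyb : Y ω < ρ ^ r * (1 + ρ * T) / ρ ^ α := by
          rw [lt_div_iff₀ hρα]
          calc Y ω * ρ ^ α = ρ ^ α * Y ω := by ring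
            _ < _ := lt_of_lt_of_le hω hb
        have hceq : c = ρ ^ r * (1 + ρ * T) / ρ ^ α := by
          rw [hcdef, Real.rpow_sub hρ0]; ring
        show Y ω ∈ Iio c
        rw [mem_Iio, hceq]; exact hyb
      · right
        exact lt_of_not_ge hx
    -- measure bound for term 1
    have hm1 : (P {ω | ρ ^ α * Y ω < (ρ ^ r - 1) * (1 + ρ * X ω)}).toReal
        ≤ c + rexp (-T) := by
      have hle : P {ω | ρ ^ α * Y ω < (ρ ^ r - 1) * (1 + ρ * X ω)}
          ≤ P (Y ⁻¹' Iio c) + P (X ⁻¹' Ioi T) :=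
        (measure_mono hsub).trans (measure_union_le _ _)
      have e1 : P (Y ⁻¹' Iio c) = expMeasure 1 (Iio c) := by
        rw [← hY, Measure.map_apply hYm measurableSet_Iio]
      have e2 : P (X ⁻¹' Ioi T) = expMeasure 1 (Ioi T) := by
        rw [← hX, Measure.map_apply hXm measurableSet_Ioi]
      calc (P {ω | ρ ^ α * Y ω < (ρ ^ r - 1) * (1 + ρ * X ω)}).toReal
          ≤ (P (Y ⁻¹' Iio c) + P (X ⁻¹' Ioi T)).toReal :=
            ENNReal.toReal_mono (by finiteness) hle
        _ = (P (Y ⁻¹' Iio c)).toReal + (P (X ⁻¹' Ioi T)).toReal :=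
            ENNReal.toReal_add (measure_ne_top _ _) (measure_ne_top _ _)
        _ ≤ c + rexp (-T) := by
            rw [e1, e2, expM_Ioi T hT0]
            exact add_le_add_left (expM_Iio_le c hc0) _
    -- bound c
    have hρT : ρ * T = ρ ^ (1 + η/2) := by
      rw [Real.rpow_add hρ0, Real.rpow_one]
    have hXP : (0:ℝ) < ρ ^ (r - α + 1 + η) := Real.rpow_pos_of_pos hρ0 _
    have hc : c ≤ (1/3) * ρ ^ (r - α + 1 + η) := by
      have h6 : (1:ℝ) ≤ ρ ^ (1 + η/2) := Real.one_le_rpow hρ1.le (by positivity)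
      have hmid : (0:ℝ) < ρ ^ (r - α + 1 + η/2) := Real.rpow_pos_of_pos hρ0 _
      calc c = ρ ^ (r - α) * (1 + ρ ^ (1 + η/2)) := by rw [hcdef, hρT]
        _ ≤ ρ ^ (r - α) * (2 * ρ ^ (1 + η/2)) :=
            mul_le_mul_of_nonneg_left (by linarith) (Real.rpow_pos_of_pos hρ0 _).le
        _ = 2 * ρ ^ (r - α + 1 + η/2) := by
            have hsp : ρ ^ (r - α) * ρ ^ (1 + η/2) = ρ ^ (r - α + 1 + η/2) := by
              rw [← Real.rpow_add hρ0]; ring_nf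
            rw [← hsp]; ring
        _ ≤ (1/3) * ρ ^ (r - α + 1 + η) := by
            have hsplit : ρ ^ (r - α + 1 + η) = ρ ^ (r - α + 1 + η/2) * ρ ^ (η/2) := by
              rw [← Real.rpow_add hρ0]; ring_nf
            rw [hsplit]
            nlinarith
    -- bound exp(-T)
    have hexpT : rexp (-T) ≤ (1/3) * ρ ^ (r - α + 1 + η) := by
      have hP2 : (0:ℝ) < ρ ^ (α - 1 - r - η) := Real.rpow_pos_of_pos hρ0 _
      rw [one_mul] at h2
      have h2' : rexp (-T) ≤ (1/3) / ρ ^ (α - 1 - r - η) := by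
        rw [le_div_iff₀ hP2, mul_comm]; exact h2
      have : (1/3) / ρ ^ (α - 1 - r - η) = (1/3) * ρ ^ (r - α + 1 + η) := by
        rw [show r - α + 1 + η = -(α - 1 - r - η) by ring, Real.rpow_neg hρ0.le,
          div_eq_mul_inv]
      linarith [h2'.trans_eq this]
    -- bound term 2
    have hρr : (0:ℝ) < ρ ^ r := Real.rpow_pos_of_pos hρ0 r
    have hu : ρ ^ ε / 2 ≤ ρ ^ r * δ ρ / 2 := by
      have he : ρ ^ ε = ρ ^ r * ρ ^ (-r + ε) := by
        rw [← Real.rpow_add hρ0]; ring_nf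
      have := mul_le_mul_of_nonneg_left hδρ hρr.le
      nlinarith
    have hu1 : (1:ℝ) ≤ ρ ^ r * δ ρ / 2 := by linarith
    have hun : (0:ℝ) ≤ ρ ^ r * δ ρ / 2 := by linarith
    have hs1 : (1:ℝ) ≤ √(ρ ^ r * δ ρ / 2) := Real.one_le_sqrt.2 hu1
    have hq : gaussQ (√(ρ ^ r * δ ρ / 2)) ≤ rexp (-(1/4 * ρ ^ ε)) := by
      refine (gaussQ_le_exp hs1).trans ?_
      rw [Real.sq_sqrt hun]
      exact Real.exp_le_exp.2 (by linarith)
    have hm2 : ρ ^ r * gaussQ (√(ρ ^ r * δ ρ / 2)) ≤ (1/3) * ρ ^ (r - α + 1 + η) := by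
      have hP3 : (0:ℝ) < ρ ^ (α - 1 - η) := Real.rpow_pos_of_pos hρ0 _
      have h3' : rexp (-(1/4 * ρ ^ ε)) ≤ (1/3) / ρ ^ (α - 1 - η) := by
        rw [le_div_iff₀ hP3, mul_comm]; exact h3
      have hconv : ρ ^ r * ((1/3) / ρ ^ (α - 1 - η)) = (1/3) * ρ ^ (r - α + 1 + η) := by
        rw [show r - α + 1 + η = r + -(α - 1 - η) by ring, Real.rpow_add hρ0,
          Real.rpow_neg hρ0.le, div_eq_mul_inv]
        ring
      calc ρ ^ r * gaussQ (√(ρ ^ r * δ ρ / 2))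
          ≤ ρ ^ r * rexp (-(1/4 * ρ ^ ε)) :=
            mul_le_mul_of_nonneg_left hq hρr.le
        _ ≤ ρ ^ r * ((1/3) / ρ ^ (α - 1 - η)) :=
            mul_le_mul_of_nonneg_left h3' hρr.le
        _ = (1/3) * ρ ^ (r - α + 1 + η) := hconv
    -- total bound
    have htot : g ρ ≤ ρ ^ (r - α + 1 + η) := by
      rw [hg ρ]
      have := hm1
      have := hm2
      linarith [hc, hexpT]
    -- positivity
    have hg0 : 0 < g ρ := by
      rw [hg ρ]
      exact add_pos_of_nonneg_of_pos ENNReal.toReal_nonneg (mul_pos hρr (gaussQ_pos _))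
    -- conclude
    rw [div_le_iff₀ (Real.log_pos hρ1)]
    calc Real.log (g ρ) ≤ Real.log (ρ ^ (r - α + 1 + η)) := Real.log_le_log hg0 htot
      _ = (r - α + 1 + η) * Real.log ρ := Real.log_rpow hρ0 _
      _ = (-(α - 1 - r) + η) * Real.log ρ := by ring
  have hlow : ∀ᶠ ρ : ℝ in atTop, (r - α - 1 : ℝ) ≤ Real.log (g ρ) / Real.log ρ := by
    have E6 : ∀ᶠ ρ : ℝ in atTop, (2:ℝ) ≤ ρ ^ r :=
      (tendsto_rpow_atTop hr0).eventually_ge_atTop 2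
    filter_upwards [E6, eventually_ge_atTop (8:ℝ)] with ρ h6 hρ8
    have hρ0 : (0:ℝ) < ρ := by linarith
    have hρ1 : (1:ℝ) < ρ := by linarith
    have hρα : (0:ℝ) < ρ ^ α := Real.rpow_pos_of_pos hρ0 α
    set q : ℝ := (ρ ^ r - 1) / ρ ^ α with hqdef
    have hq0 : 0 < q := div_pos (by linarith) hρα
    have hq1 : q ≤ 1 := by
      rw [hqdef, div_le_one hρα]
      have : ρ ^ r ≤ ρ ^ α := Real.rpow_le_rpow_of_exponent_le hρ1.le (by linarith)
      linarith
    have hIic0 : (expMeasure 1) (Iic 0) = 0 := by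
      have h0 : ((expMeasure 1) (Iic 0)).toReal = 0 := by
        rw [expM_Iic 0 le_rfl]; simp
      rcases (ENNReal.toReal_eq_zero_iff _).1 h0 with h | h
      · exact h
      · exact absurd h (measure_ne_top _ _)
    have hBnull : P (X ⁻¹' Iio 0) = 0 := by
      have : P (X ⁻¹' Iio 0) = (expMeasure 1) (Iio 0) := by
        rw [← hX, Measure.map_apply hXm measurableSet_Iio]
      rw [this]
      exact measure_mono_null Iio_subset_Iic_self hIic0
    have hsub2 : Y ⁻¹' Iio q ∩ X ⁻¹' Ici 0
        ⊆ {ω | ρ ^ α * Y ω < (ρ ^ r - 1) * (1 + ρ * X ω)} := by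
      rintro ω ⟨hy, hx⟩
      have hy' : Y ω < q := hy
      have hx' : (0:ℝ) ≤ X ω := hx
      have h1' : ρ ^ α * Y ω < ρ ^ r - 1 := by
        have h := (lt_div_iff₀ hρα).1 hy'
        linarith [h, mul_comm (Y ω) (ρ ^ α)]
      have h2' : (ρ ^ r - 1) * 1 ≤ (ρ ^ r - 1) * (1 + ρ * X ω) := by
        have hpx : (0:ℝ) ≤ ρ * X ω := mul_nonneg hρ0.le hx'
        have hr1' : (0:ℝ) ≤ ρ ^ r - 1 := by linarith
        nlinarith
      simp only [Set.mem_setOf_eq]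
      linarith
    have hPA : P (Y ⁻¹' Iio q) ≤ P {ω | ρ ^ α * Y ω < (ρ ^ r - 1) * (1 + ρ * X ω)} := by
      calc P (Y ⁻¹' Iio q)
          ≤ P (Y ⁻¹' Iio q ∩ X ⁻¹' Ici 0) + P (Y ⁻¹' Iio q \ X ⁻¹' Ici 0) :=
            measure_le_inter_add_diff _ _ _
        _ ≤ P {ω | ρ ^ α * Y ω < (ρ ^ r - 1) * (1 + ρ * X ω)} + 0 := by
            refine add_le_add (measure_mono hsub2) ?_
            refine le_of_le_of_eq (measure_mono fun ω hω => ?_) hBnull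
            have := hω.2
            simp only [Set.mem_preimage, Set.mem_Ici, not_le] at this
            exact this
        _ = P {ω | ρ ^ α * Y ω < (ρ ^ r - 1) * (1 + ρ * X ω)} := add_zero _
    have hlb : q / 4 ≤ (P {ω | ρ ^ α * Y ω < (ρ ^ r - 1) * (1 + ρ * X ω)}).toReal := by
      have step1 : ((expMeasure 1) (Iic (q/2))).toReal ≤ (P (Y ⁻¹' Iio q)).toReal := by
        refine ENNReal.toReal_mono (measure_ne_top _ _) ?_
        rw [← hY, Measure.map_apply hYm measurableSet_Iic]
        exact measure_mono (Set.preimage_mono (Iic_subset_Iio.2 (by linarith)))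
      have step2 : q / 4 ≤ 1 - rexp (-(q/2)) := by
        have hm : rexp (-(q/2)) * rexp (q/2) = 1 := by
          rw [← Real.exp_add]; simp
        have hx1 : rexp (-(q/2)) * (q/2 + 1) ≤ 1 := by
          calc rexp (-(q/2)) * (q/2 + 1)
              ≤ rexp (-(q/2)) * rexp (q/2) :=
                mul_le_mul_of_nonneg_left (Real.add_one_le_exp (q/2)) (Real.exp_pos _).le
            _ = 1 := hm
        have hx2 : -(q/2) + 1 ≤ rexp (-(q/2)) := Real.add_one_le_exp (-(q/2))
        have hx3 : (1:ℝ)/2 ≤ rexp (-(q/2)) := by linarith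
        have hx4 : q/4 ≤ rexp (-(q/2)) * (q/2) := by
          calc q/4 = (1/2) * (q/2) := by ring
            _ ≤ rexp (-(q/2)) * (q/2) := mul_le_mul_of_nonneg_right hx3 (by linarith)
        have hx5 : rexp (-(q/2)) * (q/2) + rexp (-(q/2)) ≤ 1 := by
          have : rexp (-(q/2)) * (q/2 + 1) = rexp (-(q/2)) * (q/2) + rexp (-(q/2)) := by ring
          linarith [hx1, this.symm.le, this.le]
        linarith
      have step3 := expM_Iic (q/2) (by linarith)
      have step4 := ENNReal.toReal_mono
        (measure_ne_top _ _) hPA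
      rw [step3] at step1
      linarith
    have hglb : ρ ^ (r - α) / 8 ≤ g ρ := by
      rw [hg ρ]
      have hterm2 : 0 ≤ ρ ^ r * gaussQ (√(ρ ^ r * δ ρ / 2)) :=
        le_of_lt (mul_pos (Real.rpow_pos_of_pos hρ0 r) (gaussQ_pos _))
      have hqq : ρ ^ (r - α) / 2 ≤ q := by
        rw [hqdef, Real.rpow_sub hρ0, div_div, div_le_div_iff₀ (by positivity) hρα]
        nlinarith [hρα, h6]
      linarith
    have hgpos : (0:ℝ) < ρ ^ (r - α) / 8 := by positivity
    rw [le_div_iff₀ (Real.log_pos hρ1)]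
    have hlog : Real.log (ρ ^ (r - α) / 8) ≤ Real.log (g ρ) :=
      Real.log_le_log hgpos hglb
    have hlog2 : Real.log (ρ ^ (r - α) / 8) = (r - α) * Real.log ρ - Real.log 8 := by
      rw [Real.log_div (Real.rpow_pos_of_pos hρ0 _).ne' (by norm_num), Real.log_rpow hρ0]
    have hlog8 : Real.log 8 ≤ Real.log ρ := Real.log_le_log (by norm_num) (by linarith)
    nlinarith [Real.log_pos hρ1]
  exact Filter.limsup_le_of_le (Filter.isCoboundedUnder_le_of_eventually_le atTop hlow) hfin
end

section
/- Let X and Y be independent rate-1 exponential random variables, let α ≥ 0 and r > 0. Then lim_{ρ→∞} log P[ρX + ρ^α Y < ρ^r − 1] / log ρ = −((1−r)^+ + (α−r)^+). (This joint outage event, with r = r₁ + r₂, yields the sum-rate exponent d_MU³(r) = (1−r₁−r₂)^+ + (α−r₁−r₂)^+ appearing in the multiuser (public-messages-only, p_i = −∞) branch d_MU of the fixed-power-split Han–Kobayashi DMT of Theorem 2.) -/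
open MeasureTheory ProbabilityTheory Filter Real


lemma expMeasure_Iic (s : ℝ) :
    expMeasure 1 (Set.Iic s) = ENNReal.ofReal (if 0 ≤ s then 1 - Real.exp (-s) else 0) := by
  rw [expMeasure, gammaMeasure, withDensity_apply _ measurableSet_Iic]
  have h := lintegral_exponentialPDF_eq_antiDeriv (one_pos) s
  have he : exponentialPDF 1 = gammaPDF 1 1 := rfl
  rw [he] at h
  simpa [one_mul] using h

lemma expMeasure_Iio_zero : expMeasure 1 (Set.Iio 0) = 0 := by
  rw [expMeasure, gammaMeasure, withDensity_apply _ measurableSet_Iio]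
  exact lintegral_gammaPDF_of_nonpos le_rfl

lemma one_sub_exp_le_min {s : ℝ} (hs : 0 ≤ s) : 1 - Real.exp (-s) ≤ min s 1 := by
  refine le_min ?_ (by nlinarith [Real.exp_pos (-s)])
  nlinarith [Real.add_one_le_exp (-s)]

lemma min_le_one_sub_exp {s : ℝ} (hs : 0 ≤ s) : min s 1 / 2 ≤ 1 - Real.exp (-s) := by
  have h1 : Real.exp (-s) ≤ 1 / (1 + s) := by
    rw [Real.exp_neg, inv_eq_one_div, div_le_div_iff₀ (Real.exp_pos s) (by positivity)]
    nlinarith [Real.add_one_le_exp s]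
  have h0 : (0:ℝ) < 1 + s := by linarith
  rcases le_total s 1 with h | h
  · rw [min_eq_left h]
    have h3 : 1 / (1 + s) ≤ 1 - s / 2 := by
      rw [div_le_iff₀ h0]; nlinarith
    linarith
  · rw [min_eq_right h]
    have h3 : 1 / (1 + s) ≤ 1 / 2 := by
      rw [div_le_div_iff₀ h0 two_pos]; linarith
    linarith

lemma min_rpow_eq {ρ : ℝ} (hρ : 1 ≤ ρ) (a : ℝ) : min (ρ ^ a) 1 = ρ ^ min a 0 := by
  rcases le_total a 0 with h | h
  · rw [min_eq_left h, min_eq_left]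
    calc ρ ^ a ≤ ρ ^ (0:ℝ) := Real.rpow_le_rpow_of_exponent_le hρ h
    _ = 1 := Real.rpow_zero ρ
  · rw [min_eq_right h, min_eq_right (by
      calc (1:ℝ) = ρ ^ (0:ℝ) := (Real.rpow_zero ρ).symm
      _ ≤ ρ ^ a := Real.rpow_le_rpow_of_exponent_le hρ h)]
    exact (Real.rpow_zero ρ).symm


lemma prob_bound {Ω : Type*} [MeasurableSpace Ω] (P : Measure Ω) [IsProbabilityMeasure P]
    (X Y : Ω → ℝ) (hXm : Measurable X) (hYm : Measurable Y)
    (hX : Measure.map X P = expMeasure 1) (hY : Measure.map Y P = expMeasure 1)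
    (hindep : IndepFun X Y P)
    (α r : ℝ) {ρ : ℝ} (hρ1 : 1 ≤ ρ) (hρr : 2 ≤ ρ ^ r) :
    ρ ^ (min (r - 1) 0 + min (r - α) 0) / 256
      ≤ (P {ω | ρ * X ω + ρ ^ α * Y ω < ρ ^ r - 1}).toReal ∧
    (P {ω | ρ * X ω + ρ ^ α * Y ω < ρ ^ r - 1}).toReal
      ≤ ρ ^ (min (r - 1) 0 + min (r - α) 0) := by
  have hρ0 : (0:ℝ) < ρ := lt_of_lt_of_le one_pos hρ1
  have hρα : (0:ℝ) < ρ ^ α := Real.rpow_pos_of_pos hρ0 α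
  set t : ℝ := ρ ^ r - 1 with hts
  have ht2 : ρ ^ r / 2 ≤ t := by simp only [hts]; linarith
  have ht0 : (0:ℝ) < t := by have : (0:ℝ) < ρ ^ r / 2 := by linarith
                             linarith
  -- measure of Iic preimages
  have hPX : ∀ s : ℝ, 0 ≤ s → P (X ⁻¹' Set.Iic s) = ENNReal.ofReal (1 - Real.exp (-s)) := by
    intro s hs
    rw [← Measure.map_apply hXm measurableSet_Iic, hX, expMeasure_Iic, if_pos hs]
  have hPY : ∀ s : ℝ, 0 ≤ s → P (Y ⁻¹' Set.Iic s) = ENNReal.ofReal (1 - Real.exp (-s)) := by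
    intro s hs
    rw [← Measure.map_apply hYm measurableSet_Iic, hY, expMeasure_Iic, if_pos hs]
  have hexp_nonneg : ∀ s : ℝ, 1 - Real.exp (-s) ≤ 1 := fun s => by
    nlinarith [Real.exp_pos (-s)]
  have hexp_nn : ∀ s : ℝ, 0 ≤ s → 0 ≤ 1 - Real.exp (-s) := fun s hs => by
    have := Real.exp_le_one_iff.mpr (neg_nonpos.mpr hs)
    linarith
  -- a.e. nonnegativity
  have haeX : ∀ᵐ ω ∂P, 0 ≤ X ω := by
    rw [ae_iff]
    have : {ω | ¬ 0 ≤ X ω} = X ⁻¹' Set.Iio 0 := by ext ω; simp [not_le]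
    rw [this, ← Measure.map_apply hXm measurableSet_Iio, hX]
    exact expMeasure_Iio_zero
  have haeY : ∀ᵐ ω ∂P, 0 ≤ Y ω := by
    rw [ae_iff]
    have : {ω | ¬ 0 ≤ Y ω} = Y ⁻¹' Set.Iio 0 := by ext ω; simp [not_le]
    rw [this, ← Measure.map_apply hYm measurableSet_Iio, hY]
    exact expMeasure_Iio_zero
  -- real-side exponent computations
  have hdiv1 : ρ ^ r / ρ = ρ ^ (r - 1) := by
    rw [Real.rpow_sub hρ0, Real.rpow_one]
  have hdivα : ρ ^ r / ρ ^ α = ρ ^ (r - α) := by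
    rw [Real.rpow_sub hρ0]
  have hm1 : (0:ℝ) < ρ ^ min (r - 1) 0 := Real.rpow_pos_of_pos hρ0 _
  have hm2 : (0:ℝ) < ρ ^ min (r - α) 0 := Real.rpow_pos_of_pos hρ0 _
  have hsum : ρ ^ min (r - 1) 0 * ρ ^ min (r - α) 0 = ρ ^ (min (r - 1) 0 + min (r - α) 0) :=
    (Real.rpow_add hρ0 _ _).symm
  constructor
  · -- lower bound
    have hsub : (X ⁻¹' Set.Iic (t / (4 * ρ))) ∩ (Y ⁻¹' Set.Iic (t / (4 * ρ ^ α)))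
        ⊆ {ω | ρ * X ω + ρ ^ α * Y ω < ρ ^ r - 1} := by
      rintro ω ⟨hx, hy⟩
      simp only [Set.mem_preimage, Set.mem_Iic] at hx hy
      simp only [Set.mem_setOf_eq, ← hts]
      have h1 : ρ * X ω ≤ t / 4 := by
        rw [div_mul_eq_div_div] at hx
        calc ρ * X ω ≤ ρ * (t / 4 / ρ) := by
              exact mul_le_mul_of_nonneg_left hx hρ0.le
        _ = t / 4 := by field_simp
      have h2 : ρ ^ α * Y ω ≤ t / 4 := by
        rw [div_mul_eq_div_div] at hy
        calc ρ ^ α * Y ω ≤ ρ ^ α * (t / 4 / ρ ^ α) := by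
              exact mul_le_mul_of_nonneg_left hy hρα.le
        _ = t / 4 := by field_simp
      linarith
    have hu : (0:ℝ) ≤ t / (4 * ρ) := by positivity
    have hv : (0:ℝ) ≤ t / (4 * ρ ^ α) := by positivity
    have hP1 : P ((X ⁻¹' Set.Iic (t / (4 * ρ))) ∩ (Y ⁻¹' Set.Iic (t / (4 * ρ ^ α))))
        = ENNReal.ofReal ((1 - Real.exp (-(t / (4 * ρ)))) * (1 - Real.exp (-(t / (4 * ρ ^ α))))) := by
      rw [hindep.measure_inter_preimage_eq_mul _ _ measurableSet_Iic measurableSet_Iic,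
        hPX _ hu, hPY _ hv, ← ENNReal.ofReal_mul (hexp_nn _ hu)]
    -- real lower estimates
    have key : ∀ β : ℝ, ρ ^ min (r - β) 0 / 16 ≤ 1 - Real.exp (-(t / (4 * ρ ^ β))) := by
      intro β
      have hβ0 : (0:ℝ) < ρ ^ β := Real.rpow_pos_of_pos hρ0 β
      have hw : (0:ℝ) ≤ t / (4 * ρ ^ β) := by positivity
      have h8 : ρ ^ (r - β) / 8 ≤ t / (4 * ρ ^ β) := by
        have heq : ρ ^ (r - β) / 8 = ρ ^ r / 2 / (4 * ρ ^ β) := by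
          rw [Real.rpow_sub hρ0, div_div, div_div]; congr 1; ring
        rw [heq]
        gcongr
      have hmin : min (ρ ^ (r - β)) 1 / 8 ≤ min (t / (4 * ρ ^ β)) 1 := by
        have heq2 : min (ρ ^ (r - β)) 1 / 8 = min (ρ ^ (r - β) / 8) (1 / 8) :=
          (min_div_div_right (by norm_num : (0:ℝ) ≤ 8) _ _).symm
        rw [heq2]
        exact min_le_min h8 (by norm_num)
      calc ρ ^ min (r - β) 0 / 16 = min (ρ ^ (r - β)) 1 / 8 / 2 := by
            rw [min_rpow_eq hρ1 (r - β)]; ring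
      _ ≤ min (t / (4 * ρ ^ β)) 1 / 2 := by linarith
      _ ≤ 1 - Real.exp (-(t / (4 * ρ ^ β))) := min_le_one_sub_exp hw
    have key1 := key 1
    have key2 := key α
    rw [Real.rpow_one] at key1
    have hreal : ρ ^ (min (r - 1) 0 + min (r - α) 0) / 256
        ≤ (1 - Real.exp (-(t / (4 * ρ)))) * (1 - Real.exp (-(t / (4 * ρ ^ α)))) := by
      calc ρ ^ (min (r - 1) 0 + min (r - α) 0) / 256
          = (ρ ^ min (r - 1) 0 / 16) * (ρ ^ min (r - α) 0 / 16) := by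
            rw [← hsum]; ring
      _ ≤ _ := by
            exact mul_le_mul key1 key2 (by positivity) (hexp_nn _ hu)
    have hle : ENNReal.ofReal (ρ ^ (min (r - 1) 0 + min (r - α) 0) / 256)
        ≤ P {ω | ρ * X ω + ρ ^ α * Y ω < ρ ^ r - 1} := by
      calc ENNReal.ofReal (ρ ^ (min (r - 1) 0 + min (r - α) 0) / 256)
          ≤ ENNReal.ofReal ((1 - Real.exp (-(t / (4 * ρ)))) * (1 - Real.exp (-(t / (4 * ρ ^ α))))) :=
            ENNReal.ofReal_le_ofReal hreal
      _ = P ((X ⁻¹' Set.Iic (t / (4 * ρ))) ∩ (Y ⁻¹' Set.Iic (t / (4 * ρ ^ α)))) := hP1.symm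
      _ ≤ _ := measure_mono hsub
    have := (ENNReal.ofReal_le_iff_le_toReal (measure_ne_top P _)).mp hle
    exact this
  · -- upper bound
    have hsub : {ω | ρ * X ω + ρ ^ α * Y ω < ρ ^ r - 1}
        ≤ᵐ[P] ((X ⁻¹' Set.Iic (t / ρ)) ∩ (Y ⁻¹' Set.Iic (t / ρ ^ α)) : Set Ω) := by
      filter_upwards [haeX, haeY] with ω hx hy
      intro hmem
      have hω : ρ * X ω + ρ ^ α * Y ω < t := hmem
      constructor
      · simp only [Set.mem_preimage, Set.mem_Iic]
        rw [le_div_iff₀ hρ0, mul_comm]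
        nlinarith [mul_nonneg hρα.le hy]
      · simp only [Set.mem_preimage, Set.mem_Iic]
        rw [le_div_iff₀ hρα, mul_comm]
        nlinarith [mul_nonneg hρ0.le hx]
    have hu : (0:ℝ) ≤ t / ρ := by positivity
    have hv : (0:ℝ) ≤ t / ρ ^ α := by positivity
    have hP1 : P ((X ⁻¹' Set.Iic (t / ρ)) ∩ (Y ⁻¹' Set.Iic (t / ρ ^ α)))
        = ENNReal.ofReal ((1 - Real.exp (-(t / ρ))) * (1 - Real.exp (-(t / ρ ^ α)))) := by
      rw [hindep.measure_inter_preimage_eq_mul _ _ measurableSet_Iic measurableSet_Iic,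
        hPX _ hu, hPY _ hv, ← ENNReal.ofReal_mul (hexp_nn _ hu)]
    have key : ∀ β : ℝ, 1 - Real.exp (-(t / ρ ^ β)) ≤ ρ ^ min (r - β) 0 := by
      intro β
      have hβ0 : (0:ℝ) < ρ ^ β := Real.rpow_pos_of_pos hρ0 β
      have hw : (0:ℝ) ≤ t / ρ ^ β := by positivity
      have hle : t / ρ ^ β ≤ ρ ^ (r - β) := by
        rw [Real.rpow_sub hρ0]
        gcongr
        simp only [hts]; linarith
      calc 1 - Real.exp (-(t / ρ ^ β)) ≤ min (t / ρ ^ β) 1 := one_sub_exp_le_min hw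
      _ ≤ min (ρ ^ (r - β)) 1 := min_le_min hle le_rfl
      _ = ρ ^ min (r - β) 0 := min_rpow_eq hρ1 _
    have key1 := key 1
    have key2 := key α
    rw [Real.rpow_one] at key1
    have h1nn : (0:ℝ) ≤ 1 - Real.exp (-(t / ρ)) := hexp_nn _ hu
    have hreal : (1 - Real.exp (-(t / ρ))) * (1 - Real.exp (-(t / ρ ^ α)))
        ≤ ρ ^ (min (r - 1) 0 + min (r - α) 0) := by
      rw [← hsum]
      exact mul_le_mul key1 key2 (hexp_nn _ hv) hm1.le
    have hle : P {ω | ρ * X ω + ρ ^ α * Y ω < ρ ^ r - 1}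
        ≤ ENNReal.ofReal (ρ ^ (min (r - 1) 0 + min (r - α) 0)) := by
      calc P {ω | ρ * X ω + ρ ^ α * Y ω < ρ ^ r - 1}
          ≤ P ((X ⁻¹' Set.Iic (t / ρ)) ∩ (Y ⁻¹' Set.Iic (t / ρ ^ α))) := measure_mono_ae hsub
      _ = ENNReal.ofReal ((1 - Real.exp (-(t / ρ))) * (1 - Real.exp (-(t / ρ ^ α)))) := hP1
      _ ≤ _ := ENNReal.ofReal_le_ofReal hreal
    exact ENNReal.toReal_le_of_le_ofReal (Real.rpow_pos_of_pos hρ0 _).le hle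

/-- Joint (sum-rate) outage exponent: for independent rate-1 exponential `X, Y`,
`α ≥ 0` and `r > 0`, `P[ρX + ρ^α Y < ρ^r − 1] ≐ ρ^{−((1−r)^+ + (α−r)^+)}`. -/
theorem stmt_11 {Ω : Type*} [MeasurableSpace Ω] (P : Measure Ω) [IsProbabilityMeasure P]
    (X Y : Ω → ℝ) (hXm : Measurable X) (hYm : Measurable Y)
    (hX : Measure.map X P = expMeasure 1) (hY : Measure.map Y P = expMeasure 1)
    (hindep : IndepFun X Y P)
    (α r : ℝ) (hα : 0 ≤ α) (hr : 0 < r) :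
    Tendsto (fun ρ : ℝ =>
        Real.log (P {ω | ρ * X ω + ρ ^ α * Y ω < ρ ^ r - 1}).toReal / Real.log ρ)
      atTop (nhds (-(max (1 - r) 0 + max (α - r) 0))) := by
  set m : ℝ := min (r - 1) 0 + min (r - α) 0 with hm
  have hmval : -(max (1 - r) 0 + max (α - r) 0) = m := by
    simp only [hm, min_def, max_def]
    split_ifs <;> linarith
  rw [hmval]
  have hev : ∀ᶠ ρ : ℝ in atTop, (2:ℝ) ≤ ρ ∧ (2:ℝ) ≤ ρ ^ r := by
    filter_upwards [eventually_ge_atTop (2:ℝ),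
      (tendsto_rpow_atTop hr).eventually_ge_atTop (2:ℝ)] with ρ h1 h2
    exact ⟨h1, h2⟩
  have hlow : Tendsto (fun ρ : ℝ => m - Real.log 256 / Real.log ρ) atTop (nhds m) := by
    have : Tendsto (fun ρ : ℝ => Real.log 256 / Real.log ρ) atTop (nhds 0) :=
      tendsto_const_nhds.div_atTop Real.tendsto_log_atTop
    simpa using tendsto_const_nhds.sub this
  refine tendsto_of_tendsto_of_tendsto_of_le_of_le' hlow tendsto_const_nhds ?_ ?_
  · filter_upwards [hev] with ρ ⟨hρ2, hρr⟩
    have hρ1 : (1:ℝ) ≤ ρ := by linarith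
    have hρ0 : (0:ℝ) < ρ := by linarith
    obtain ⟨hlo, hup⟩ := prob_bound P X Y hXm hYm hX hY hindep α r hρ1 hρr
    have hlog : 0 < Real.log ρ := Real.log_pos (by linarith)
    have hfpos : 0 < (P {ω | ρ * X ω + ρ ^ α * Y ω < ρ ^ r - 1}).toReal :=
      lt_of_lt_of_le (by positivity) hlo
    have hloglow : m * Real.log ρ - Real.log 256
        ≤ Real.log (P {ω | ρ * X ω + ρ ^ α * Y ω < ρ ^ r - 1}).toReal := by
      have h1 : Real.log (ρ ^ m / 256)
          ≤ Real.log (P {ω | ρ * X ω + ρ ^ α * Y ω < ρ ^ r - 1}).toReal :=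
        Real.log_le_log (by positivity) hlo
      rwa [Real.log_div (by positivity) (by norm_num), Real.log_rpow hρ0] at h1
    have heq : m - Real.log 256 / Real.log ρ
        = (m * Real.log ρ - Real.log 256) / Real.log ρ := by
      field_simp
    rw [heq]
    gcongr
  · filter_upwards [hev] with ρ ⟨hρ2, hρr⟩
    have hρ1 : (1:ℝ) ≤ ρ := by linarith
    have hρ0 : (0:ℝ) < ρ := by linarith
    obtain ⟨hlo, hup⟩ := prob_bound P X Y hXm hYm hX hY hindep α r hρ1 hρr
    have hlog : 0 < Real.log ρ := Real.log_pos (by linarith)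
    have hfpos : 0 < (P {ω | ρ * X ω + ρ ^ α * Y ω < ρ ^ r - 1}).toReal :=
      lt_of_lt_of_le (by positivity) hlo
    have hlogup : Real.log (P {ω | ρ * X ω + ρ ^ α * Y ω < ρ ^ r - 1}).toReal
        ≤ m * Real.log ρ := by
      calc Real.log (P {ω | ρ * X ω + ρ ^ α * Y ω < ρ ^ r - 1}).toReal
          ≤ Real.log (ρ ^ m) := Real.log_le_log hfpos hup
      _ = m * Real.log ρ := Real.log_rpow hρ0 m
    rw [div_le_iff₀ hlog]
    exact hlogup
end

section
/- Let X and Y be independent rate-1 exponential random variables, let α ≥ 0 and r₁, r₂ ∈ (0,1]. Then lim_{ρ→∞} log P[ {1 + ρX < ρ^{r₁}} ∪ {1 + ρ^α Y < ρ^{r₂}} ∪ {1 + ρX + ρ^α Y < ρ^{r₁+r₂}} ] / log ρ = −min{1 − r₁, (α − r₂)^+, (1 − r₁ − r₂)^+ + (α − r₁ − r₂)^+}. (Exponent of the joint-decoding (multiple-access-type) outage event at a single receiver that sees the intended signal at power SNR and the interfering signal at power SNR^α; the corresponding exponents govern the multiuser branch d_MU of the DMT in Theorem 2.) -/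
open MeasureTheory ProbabilityTheory Filter Real
open Set

lemma expMeasure_Iio' (t : ℝ) :
    expMeasure 1 (Set.Iio t) = ENNReal.ofReal (if 0 ≤ t then 1 - Real.exp (-t) else 0) := by
  rw [expMeasure, gammaMeasure, withDensity_apply _ measurableSet_Iio,
    setLIntegral_congr Iio_ae_eq_Iic]
  have h : ∀ x, gammaPDF 1 1 x = exponentialPDF 1 x := fun x => rfl
  simp_rw [h]
  rw [lintegral_exponentialPDF_eq_antiDeriv one_pos]
  simp

lemma cdf_lt' {Ω : Type*} [MeasurableSpace Ω] (P : Measure Ω) (Z : Ω → ℝ)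
    (hZm : Measurable Z) (hZ : Measure.map Z P = expMeasure 1) (t : ℝ) :
    P {ω | Z ω < t} = ENNReal.ofReal (if 0 ≤ t then 1 - Real.exp (-t) else 0) := by
  have h : {ω | Z ω < t} = Z ⁻¹' Set.Iio t := rfl
  rw [h, ← Measure.map_apply hZm measurableSet_Iio, hZ, expMeasure_Iio']

lemma F_le' {t : ℝ} : 1 - Real.exp (-t) ≤ min t 1 := by
  have h1 : 1 - Real.exp (-t) ≤ t := by nlinarith [Real.add_one_le_exp (-t)]
  have h2 : 1 - Real.exp (-t) ≤ 1 := by nlinarith [Real.exp_pos (-t)]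
  exact le_min h1 h2

lemma F_ge' {t : ℝ} (ht : 0 ≤ t) :
    (1 - Real.exp (-1)) * min t 1 ≤ 1 - Real.exp (-t) := by
  rcases le_or_gt t 1 with h | h
  · rw [min_eq_left h]
    have := convexOn_exp.2 (Set.mem_univ (0:ℝ)) (Set.mem_univ (-1:ℝ))
      (show (0:ℝ) ≤ 1 - t by linarith) ht (show (1 - t) + t = 1 by ring)
    simp only [smul_eq_mul, mul_zero, zero_add, mul_neg, mul_one, Real.exp_zero] at this
    nlinarith [this]
  · rw [min_eq_right h.le]
    have : Real.exp (-t) ≤ Real.exp (-1) := Real.exp_le_exp.2 (by linarith)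
    linarith

lemma min_rpow_one {ρ x : ℝ} (hρ : 1 ≤ ρ) : min (ρ ^ x) 1 = ρ ^ (-(max (-x) 0)) := by
  rcases le_or_gt x 0 with h | h
  · rw [max_eq_left (by linarith), neg_neg,
      min_eq_left (Real.rpow_le_one_of_one_le_of_nonpos hρ h)]
  · rw [max_eq_right (by linarith), neg_zero, Real.rpow_zero, min_eq_right]
    calc (1:ℝ) = ρ ^ (0:ℝ) := (Real.rpow_zero ρ).symm
    _ ≤ ρ ^ x := Real.rpow_le_rpow_of_exponent_le hρ h.le

lemma main_bounds {Ω : Type*} [MeasurableSpace Ω] (P : Measure Ω) [IsProbabilityMeasure P]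
    (X Y : Ω → ℝ) (hXm : Measurable X) (hYm : Measurable Y)
    (hX : Measure.map X P = expMeasure 1) (hY : Measure.map Y P = expMeasure 1)
    (hindep : IndepFun X Y P)
    (α r₁ r₂ : ℝ)
    (hr₁1 : r₁ ≤ 1) (ρ : ℝ)
    (hρ1 : 1 ≤ ρ) (h2a : 2 ≤ ρ ^ r₁) (h2b : 2 ≤ ρ ^ r₂) (h2c : 2 ≤ ρ ^ (r₁ + r₂)) :
    ((1 - Real.exp (-1))/4)^2 *
        ρ ^ (-(min (1 - r₁) (min (max (α - r₂) 0) (max (1 - r₁ - r₂) 0 + max (α - r₁ - r₂) 0)))) ≤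
      (P ({ω | 1 + ρ * X ω < ρ ^ r₁} ∪ {ω | 1 + ρ ^ α * Y ω < ρ ^ r₂}
            ∪ {ω | 1 + ρ * X ω + ρ ^ α * Y ω < ρ ^ (r₁ + r₂)})).toReal ∧
      (P ({ω | 1 + ρ * X ω < ρ ^ r₁} ∪ {ω | 1 + ρ ^ α * Y ω < ρ ^ r₂}
            ∪ {ω | 1 + ρ * X ω + ρ ^ α * Y ω < ρ ^ (r₁ + r₂)})).toReal ≤
        3 * ρ ^ (-(min (1 - r₁) (min (max (α - r₂) 0)
          (max (1 - r₁ - r₂) 0 + max (α - r₁ - r₂) 0)))) := by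
  have hρ0 : (0:ℝ) < ρ := lt_of_lt_of_le one_pos hρ1
  have hρα : (0:ℝ) < ρ ^ α := Real.rpow_pos_of_pos hρ0 α
  set c : ℝ := 1 - Real.exp (-1) with hc
  have hc0 : 0 < c := by
    have h := Real.exp_lt_exp.2 (show (-1:ℝ) < 0 by norm_num)
    rw [Real.exp_zero] at h; simp only [hc]; linarith
  have hc1 : c ≤ 1 := by have := Real.exp_pos (-1); simp only [hc]; linarith
  set EA := 1 - r₁ with hEA
  set EB := max (α - r₂) 0 with hEB
  set EC := max (1 - r₁ - r₂) 0 + max (α - r₁ - r₂) 0 with hEC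
  set E := min EA (min EB EC) with hE
  set A := {ω | 1 + ρ * X ω < ρ ^ r₁} with hA
  set B := {ω | 1 + ρ ^ α * Y ω < ρ ^ r₂} with hB
  set C := {ω | 1 + ρ * X ω + ρ ^ α * Y ω < ρ ^ (r₁ + r₂)} with hC
  -- rpow algebra
  have hmulX : ∀ x : ℝ, ρ * ρ ^ (x - 1) = ρ ^ x := fun x => by
    rw [Real.rpow_sub hρ0, Real.rpow_one, mul_div_cancel₀ _ (ne_of_gt hρ0)]
  have hmulY : ∀ x : ℝ, ρ ^ α * ρ ^ (x - α) = ρ ^ x := fun x => by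
    rw [← Real.rpow_add hρ0]; ring_nf
  -- cdf facts
  have cdfX : ∀ t : ℝ, 0 ≤ t → (P {ω | X ω < t}).toReal = 1 - Real.exp (-t) := by
    intro t ht
    rw [cdf_lt' P X hXm hX, if_pos ht, ENNReal.toReal_ofReal]
    have h := Real.exp_le_exp.2 (show -t ≤ 0 by linarith)
    rw [Real.exp_zero] at h; linarith
  have cdfY : ∀ t : ℝ, 0 ≤ t → (P {ω | Y ω < t}).toReal = 1 - Real.exp (-t) := by
    intro t ht
    rw [cdf_lt' P Y hYm hY, if_pos ht, ENNReal.toReal_ofReal]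
    have h := Real.exp_le_exp.2 (show -t ≤ 0 by linarith)
    rw [Real.exp_zero] at h; linarith
  have hX0 : P {ω | X ω < 0} = 0 := by rw [cdf_lt' P X hXm hX]; simp
  have hY0 : P {ω | Y ω < 0} = 0 := by rw [cdf_lt' P Y hYm hY]; simp
  have toR : ∀ S T : Set Ω, S ⊆ T → (P S).toReal ≤ (P T).toReal := fun S T h =>
    ENNReal.toReal_mono (measure_ne_top P T) (measure_mono h)
  have toR0 : ∀ S : Set Ω, 0 ≤ (P S).toReal := fun S => ENNReal.toReal_nonneg
  -- independence fact
  have hind : ∀ u v : ℝ, P ({ω | X ω < u} ∩ {ω | Y ω < v})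
      = P {ω | X ω < u} * P {ω | Y ω < v} :=
    fun u v => hindep.measure_inter_preimage_eq_mul _ _ measurableSet_Iio measurableSet_Iio
  -- upper bounds
  have hEEA : ρ ^ (-EA) ≤ ρ ^ (-E) :=
    Real.rpow_le_rpow_of_exponent_le hρ1 (neg_le_neg (min_le_left _ _))
  have hEEB : ρ ^ (-EB) ≤ ρ ^ (-E) :=
    Real.rpow_le_rpow_of_exponent_le hρ1
      (neg_le_neg ((min_le_right _ _).trans (min_le_left _ _)))
  have hEEC : ρ ^ (-EC) ≤ ρ ^ (-E) :=
    Real.rpow_le_rpow_of_exponent_le hρ1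
      (neg_le_neg ((min_le_right _ _).trans (min_le_right _ _)))
  have hA_up : (P A).toReal ≤ ρ ^ (-EA) := by
    have h1 : A ⊆ {ω | X ω < ρ ^ (r₁ - 1)} := by
      intro ω hω
      simp only [hA, mem_setOf_eq] at hω ⊢
      have h3 : ρ * X ω < ρ * ρ ^ (r₁ - 1) := by rw [hmulX r₁]; linarith
      exact (mul_lt_mul_iff_right₀ hρ0).1 h3
    calc (P A).toReal ≤ (P {ω | X ω < ρ ^ (r₁ - 1)}).toReal := toR _ _ h1
      _ = 1 - Real.exp (-(ρ ^ (r₁ - 1))) := cdfX _ (Real.rpow_pos_of_pos hρ0 _).le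
      _ ≤ min (ρ ^ (r₁ - 1)) 1 := F_le'
      _ ≤ ρ ^ (r₁ - 1) := min_le_left _ _
      _ = ρ ^ (-EA) := by rw [show r₁ - 1 = -EA by rw [hEA]; ring]
  have hB_up : (P B).toReal ≤ ρ ^ (-EB) := by
    have h1 : B ⊆ {ω | Y ω < ρ ^ (r₂ - α)} := by
      intro ω hω
      simp only [hB, mem_setOf_eq] at hω ⊢
      have h3 : ρ ^ α * Y ω < ρ ^ α * ρ ^ (r₂ - α) := by rw [hmulY r₂]; linarith
      exact (mul_lt_mul_iff_right₀ hρα).1 h3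
    calc (P B).toReal ≤ (P {ω | Y ω < ρ ^ (r₂ - α)}).toReal := toR _ _ h1
      _ = 1 - Real.exp (-(ρ ^ (r₂ - α))) := cdfY _ (Real.rpow_pos_of_pos hρ0 _).le
      _ ≤ min (ρ ^ (r₂ - α)) 1 := F_le'
      _ = ρ ^ (-(max (-(r₂ - α)) 0)) := min_rpow_one hρ1
      _ = ρ ^ (-EB) := by rw [show -(r₂ - α) = α - r₂ by ring, hEB]
  have hC_up : (P C).toReal ≤ ρ ^ (-EC) := by
    have h1 : C ⊆ ({ω | X ω < ρ ^ (r₁ + r₂ - 1)} ∩ {ω | Y ω < ρ ^ (r₁ + r₂ - α)})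
        ∪ ({ω | X ω < 0} ∪ {ω | Y ω < 0}) := by
      intro ω hω
      simp only [hC, mem_setOf_eq, mem_union, mem_inter_iff] at hω ⊢
      rcases lt_or_ge (X ω) 0 with h | hx
      · exact Or.inr (Or.inl h)
      rcases lt_or_ge (Y ω) 0 with h | hy
      · exact Or.inr (Or.inr h)
      refine Or.inl ⟨?_, ?_⟩
      · have h3 : ρ * X ω < ρ * ρ ^ (r₁ + r₂ - 1) := by
          rw [hmulX (r₁ + r₂)]; nlinarith
        exact (mul_lt_mul_iff_right₀ hρ0).1 h3
      · have h3 : ρ ^ α * Y ω < ρ ^ α * ρ ^ (r₁ + r₂ - α) := by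
          rw [hmulY (r₁ + r₂)]; nlinarith
        exact (mul_lt_mul_iff_right₀ hρα).1 h3
    have h2 : P C ≤ P ({ω | X ω < ρ ^ (r₁ + r₂ - 1)} ∩ {ω | Y ω < ρ ^ (r₁ + r₂ - α)}) := by
      calc P C ≤ _ := measure_mono h1
        _ ≤ P ({ω | X ω < ρ ^ (r₁ + r₂ - 1)} ∩ {ω | Y ω < ρ ^ (r₁ + r₂ - α)})
            + P ({ω | X ω < 0} ∪ {ω | Y ω < 0}) := measure_union_le _ _
        _ ≤ P ({ω | X ω < ρ ^ (r₁ + r₂ - 1)} ∩ {ω | Y ω < ρ ^ (r₁ + r₂ - α)})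
            + (P {ω | X ω < 0} + P {ω | Y ω < 0}) :=
          add_le_add_right (measure_union_le _ _) _
        _ = _ := by rw [hX0, hY0]; simp
    calc (P C).toReal
        ≤ (P ({ω | X ω < ρ ^ (r₁ + r₂ - 1)} ∩ {ω | Y ω < ρ ^ (r₁ + r₂ - α)})).toReal :=
          ENNReal.toReal_mono (measure_ne_top P _) h2
      _ = (P {ω | X ω < ρ ^ (r₁ + r₂ - 1)}).toReal * (P {ω | Y ω < ρ ^ (r₁ + r₂ - α)}).toReal := by
          rw [hind, ENNReal.toReal_mul]
      _ ≤ min (ρ ^ (r₁ + r₂ - 1)) 1 * min (ρ ^ (r₁ + r₂ - α)) 1 := by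
          apply mul_le_mul
          · rw [cdfX _ (Real.rpow_pos_of_pos hρ0 _).le]; exact F_le'
          · rw [cdfY _ (Real.rpow_pos_of_pos hρ0 _).le]; exact F_le'
          · exact toR0 _
          · exact le_min (Real.rpow_pos_of_pos hρ0 _).le one_pos.le
      _ = ρ ^ (-(max (1 - r₁ - r₂) 0)) * ρ ^ (-(max (α - r₁ - r₂) 0)) := by
          rw [min_rpow_one hρ1, min_rpow_one hρ1,
            show -(r₁ + r₂ - 1) = 1 - r₁ - r₂ by ring,
            show -(r₁ + r₂ - α) = α - r₁ - r₂ by ring]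
      _ = ρ ^ (-EC) := by rw [← Real.rpow_add hρ0, hEC]; ring_nf
  have hup : (P (A ∪ B ∪ C)).toReal ≤ 3 * ρ ^ (-E) := by
    have h1 : P (A ∪ B ∪ C) ≤ P A + P B + P C :=
      le_trans (measure_union_le _ _) (add_le_add_left (measure_union_le _ _) _)
    have h2 : (P (A ∪ B ∪ C)).toReal ≤ (P A).toReal + (P B).toReal + (P C).toReal := by
      calc (P (A ∪ B ∪ C)).toReal ≤ (P A + P B + P C).toReal :=
            ENNReal.toReal_mono (by finiteness) h1
        _ = _ := by
            rw [ENNReal.toReal_add (by finiteness) (by finiteness),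
              ENNReal.toReal_add (by finiteness) (by finiteness)]
    linarith [hA_up.trans hEEA, hB_up.trans hEEB, hC_up.trans hEEC]
  -- lower bounds
  have hmin_half : ∀ t k : ℝ, 1 ≤ k → 0 < t → min t 1 / k ≤ min (t / k) 1 := by
    intro t k hk ht
    have hk0 : (0:ℝ) < k := by linarith
    apply le_min
    · gcongr
      exact min_le_left _ _
    · have h1 : min t 1 / k ≤ 1 / k := by gcongr; exact min_le_right _ _
      have h2 : (1:ℝ) / k ≤ 1 := by rw [div_le_one hk0]; exact hk
      linarith
  refine ⟨?_, hup⟩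
  -- lower bounds
  have hA_low : c / 2 * ρ ^ (-EA) ≤ (P (A ∪ B ∪ C)).toReal := by
    have hsub : {ω | X ω < ρ ^ (r₁ - 1) / 2} ⊆ A ∪ B ∪ C := by
      intro ω hω
      apply mem_union_left; apply mem_union_left
      simp only [hA, mem_setOf_eq] at hω ⊢
      have h3 : ρ * X ω < ρ * (ρ ^ (r₁ - 1) / 2) := (mul_lt_mul_iff_right₀ hρ0).2 hω
      rw [← mul_div_assoc, hmulX r₁] at h3
      linarith
    have hpos : 0 < ρ ^ (r₁ - 1) := Real.rpow_pos_of_pos hρ0 _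
    have hval : c / 2 * ρ ^ (-EA) ≤ (P {ω | X ω < ρ ^ (r₁ - 1) / 2}).toReal := by
      rw [cdfX _ (by positivity)]
      have hle1 : ρ ^ (r₁ - 1) ≤ 1 :=
        Real.rpow_le_one_of_one_le_of_nonpos hρ1 (by linarith)
      have h1 : c * min (ρ ^ (r₁ - 1) / 2) 1 ≤ 1 - Real.exp (-(ρ ^ (r₁ - 1) / 2)) :=
        F_ge' (by positivity)
      rw [min_eq_left (by linarith)] at h1
      have h3 : ρ ^ (-EA) = ρ ^ (r₁ - 1) := by rw [show -EA = r₁ - 1 by rw [hEA]; ring]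
      rw [h3]; linarith
    exact hval.trans (toR _ _ hsub)
  have hB_low : c / 2 * ρ ^ (-EB) ≤ (P (A ∪ B ∪ C)).toReal := by
    have hsub : {ω | Y ω < ρ ^ (r₂ - α) / 2} ⊆ A ∪ B ∪ C := by
      intro ω hω
      apply mem_union_left; apply mem_union_right
      simp only [hB, mem_setOf_eq] at hω ⊢
      have h3 : ρ ^ α * Y ω < ρ ^ α * (ρ ^ (r₂ - α) / 2) := (mul_lt_mul_iff_right₀ hρα).2 hω
      rw [← mul_div_assoc, hmulY r₂] at h3
      linarith
    have hpos : 0 < ρ ^ (r₂ - α) := Real.rpow_pos_of_pos hρ0 _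
    have hval : c / 2 * ρ ^ (-EB) ≤ (P {ω | Y ω < ρ ^ (r₂ - α) / 2}).toReal := by
      rw [cdfY _ (by positivity)]
      have h1 : c * min (ρ ^ (r₂ - α) / 2) 1 ≤ 1 - Real.exp (-(ρ ^ (r₂ - α) / 2)) :=
        F_ge' (by positivity)
      have h2 : min (ρ ^ (r₂ - α)) 1 / 2 ≤ min (ρ ^ (r₂ - α) / 2) 1 :=
        hmin_half _ 2 one_le_two hpos
      have h4 : min (ρ ^ (r₂ - α)) 1 = ρ ^ (-EB) := by
        rw [min_rpow_one hρ1, show -(r₂ - α) = α - r₂ by ring, hEB]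
      nlinarith [min_le_left (ρ ^ (r₂ - α) / 2) 1, hc0]
    exact hval.trans (toR _ _ hsub)
  have hC_low : (c / 4) ^ 2 * ρ ^ (-EC) ≤ (P (A ∪ B ∪ C)).toReal := by
    have hu0 : 0 < ρ ^ (r₁ + r₂ - 1) := Real.rpow_pos_of_pos hρ0 _
    have hv0 : 0 < ρ ^ (r₁ + r₂ - α) := Real.rpow_pos_of_pos hρ0 _
    have hsub : {ω | X ω < ρ ^ (r₁ + r₂ - 1) / 4} ∩ {ω | Y ω < ρ ^ (r₁ + r₂ - α) / 4}
        ⊆ A ∪ B ∪ C := by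
      rintro ω ⟨h1, h2⟩
      apply mem_union_right
      simp only [mem_setOf_eq] at h1 h2
      simp only [hC, mem_setOf_eq]
      have e1 : ρ * X ω < ρ ^ (r₁ + r₂) / 4 := by
        have h3 := (mul_lt_mul_iff_right₀ hρ0).2 h1
        rwa [← mul_div_assoc, hmulX (r₁ + r₂)] at h3
      have e2 : ρ ^ α * Y ω < ρ ^ (r₁ + r₂) / 4 := by
        have h3 := (mul_lt_mul_iff_right₀ hρα).2 h2
        rwa [← mul_div_assoc, hmulY (r₁ + r₂)] at h3
      linarith
    have hval : (c / 4) ^ 2 * ρ ^ (-EC)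
        ≤ (P ({ω | X ω < ρ ^ (r₁ + r₂ - 1) / 4} ∩ {ω | Y ω < ρ ^ (r₁ + r₂ - α) / 4})).toReal := by
      rw [hind, ENNReal.toReal_mul, cdfX _ (by positivity), cdfY _ (by positivity)]
      have hx1 : c / 4 * min (ρ ^ (r₁ + r₂ - 1)) 1
          ≤ 1 - Real.exp (-(ρ ^ (r₁ + r₂ - 1) / 4)) := by
        have h1 : c * min (ρ ^ (r₁ + r₂ - 1) / 4) 1
            ≤ 1 - Real.exp (-(ρ ^ (r₁ + r₂ - 1) / 4)) := F_ge' (by positivity)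
        have h2 := hmin_half (ρ ^ (r₁ + r₂ - 1)) 4 (by norm_num) hu0
        calc c / 4 * min (ρ ^ (r₁ + r₂ - 1)) 1 = c * (min (ρ ^ (r₁ + r₂ - 1)) 1 / 4) := by ring
          _ ≤ c * min (ρ ^ (r₁ + r₂ - 1) / 4) 1 := mul_le_mul_of_nonneg_left h2 hc0.le
          _ ≤ _ := h1
      have hy1 : c / 4 * min (ρ ^ (r₁ + r₂ - α)) 1
          ≤ 1 - Real.exp (-(ρ ^ (r₁ + r₂ - α) / 4)) := by
        have h1 : c * min (ρ ^ (r₁ + r₂ - α) / 4) 1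
            ≤ 1 - Real.exp (-(ρ ^ (r₁ + r₂ - α) / 4)) := F_ge' (by positivity)
        have h2 := hmin_half (ρ ^ (r₁ + r₂ - α)) 4 (by norm_num) hv0
        calc c / 4 * min (ρ ^ (r₁ + r₂ - α)) 1 = c * (min (ρ ^ (r₁ + r₂ - α)) 1 / 4) := by ring
          _ ≤ c * min (ρ ^ (r₁ + r₂ - α) / 4) 1 := mul_le_mul_of_nonneg_left h2 hc0.le
          _ ≤ _ := h1
      have hx0 : 0 ≤ c / 4 * min (ρ ^ (r₁ + r₂ - 1)) 1 := by positivity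
      have hy0 : 0 ≤ c / 4 * min (ρ ^ (r₁ + r₂ - α)) 1 := by positivity
      calc (c / 4) ^ 2 * ρ ^ (-EC)
          = (c / 4 * min (ρ ^ (r₁ + r₂ - 1)) 1) * (c / 4 * min (ρ ^ (r₁ + r₂ - α)) 1) := by
            rw [min_rpow_one hρ1, min_rpow_one hρ1,
              show -(r₁ + r₂ - 1) = 1 - r₁ - r₂ by ring,
              show -(r₁ + r₂ - α) = α - r₁ - r₂ by ring, hEC,
              neg_add, Real.rpow_add hρ0]
            ring
        _ ≤ (1 - Real.exp (-(ρ ^ (r₁ + r₂ - 1) / 4)))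
              * (1 - Real.exp (-(ρ ^ (r₁ + r₂ - α) / 4))) := by
            apply mul_le_mul hx1 hy1 hy0
            have hineq := Real.exp_le_exp.2 (show -(ρ ^ (r₁ + r₂ - 1) / 4) ≤ 0 by linarith)
            rw [Real.exp_zero] at hineq; linarith
    exact hval.trans (toR _ _ hsub)
  have hcc : (c / 4) ^ 2 ≤ c / 2 := by nlinarith
  have hE_cases : E = EA ∨ E = EB ∨ E = EC := by
    rcases min_cases EA (min EB EC) with ⟨h, _⟩ | ⟨h, _⟩
    · exact Or.inl (hE.trans h)
    · rcases min_cases EB EC with ⟨h2, _⟩ | ⟨h2, _⟩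
      · exact Or.inr (Or.inl ((hE.trans h).trans h2))
      · exact Or.inr (Or.inr ((hE.trans h).trans h2))
  have hrpow0 : 0 ≤ ρ ^ (-E) := (Real.rpow_pos_of_pos hρ0 _).le
  rcases hE_cases with h | h | h
  · calc (c / 4) ^ 2 * ρ ^ (-E) ≤ c / 2 * ρ ^ (-E) :=
        mul_le_mul_of_nonneg_right hcc hrpow0
      _ = c / 2 * ρ ^ (-EA) := by rw [h]
      _ ≤ _ := hA_low
  · calc (c / 4) ^ 2 * ρ ^ (-E) ≤ c / 2 * ρ ^ (-E) :=
        mul_le_mul_of_nonneg_right hcc hrpow0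
      _ = c / 2 * ρ ^ (-EB) := by rw [h]
      _ ≤ _ := hB_low
  · calc (c / 4) ^ 2 * ρ ^ (-E) = (c / 4) ^ 2 * ρ ^ (-EC) := by rw [h]
      _ ≤ _ := hC_low

/-- Exponent of the joint-decoding (multiple-access-type) outage event at a single
receiver seeing the intended signal at power `ρ` and the interferer at power `ρ^α`. -/
theorem stmt_13 {Ω : Type*} [MeasurableSpace Ω] (P : Measure Ω) [IsProbabilityMeasure P]
    (X Y : Ω → ℝ) (hXm : Measurable X) (hYm : Measurable Y)
    (hX : Measure.map X P = expMeasure 1) (hY : Measure.map Y P = expMeasure 1)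
    (hindep : IndepFun X Y P)
    (α r₁ r₂ : ℝ) (hα : 0 ≤ α)
    (hr₁0 : 0 < r₁) (hr₁1 : r₁ ≤ 1) (hr₂0 : 0 < r₂) (hr₂1 : r₂ ≤ 1) :
    Tendsto (fun ρ : ℝ =>
        Real.log (P ({ω | 1 + ρ * X ω < ρ ^ r₁} ∪ {ω | 1 + ρ ^ α * Y ω < ρ ^ r₂}
            ∪ {ω | 1 + ρ * X ω + ρ ^ α * Y ω < ρ ^ (r₁ + r₂)})).toReal / Real.log ρ)
      atTop
      (nhds (-min (1 - r₁)
        (min (max (α - r₂) 0) (max (1 - r₁ - r₂) 0 + max (α - r₁ - r₂) 0)))) := by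
  set E := min (1 - r₁) (min (max (α - r₂) 0) (max (1 - r₁ - r₂) 0 + max (α - r₁ - r₂) 0))
    with hE
  set c₁ : ℝ := ((1 - Real.exp (-1)) / 4) ^ 2 with hc₁
  have hcpos : 0 < 1 - Real.exp (-1) := by
    have h := Real.exp_lt_exp.2 (show (-1:ℝ) < 0 by norm_num)
    rw [Real.exp_zero] at h; linarith
  have hc₁0 : 0 < c₁ := by rw [hc₁]; positivity
  have hglim : Tendsto (fun ρ : ℝ => Real.log c₁ / Real.log ρ + (-E)) atTop (nhds (-E)) := by
    have h := (tendsto_const_nhds (x := Real.log c₁)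
      (f := atTop (α := ℝ))).div_atTop Real.tendsto_log_atTop
    simpa using h.add_const (-E)
  have hhlim : Tendsto (fun ρ : ℝ => Real.log 3 / Real.log ρ + (-E)) atTop (nhds (-E)) := by
    have h := (tendsto_const_nhds (x := Real.log 3)
      (f := atTop (α := ℝ))).div_atTop Real.tendsto_log_atTop
    simpa using h.add_const (-E)
  refine tendsto_of_tendsto_of_tendsto_of_le_of_le' hglim hhlim ?_ ?_
  · filter_upwards [(tendsto_rpow_atTop hr₁0).eventually_ge_atTop 2,
      (tendsto_rpow_atTop hr₂0).eventually_ge_atTop 2,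
      (tendsto_rpow_atTop (by linarith : (0:ℝ) < r₁ + r₂)).eventually_ge_atTop 2,
      eventually_gt_atTop 1] with ρ ha hb hcc hρ
    obtain ⟨hlow, hupp⟩ := main_bounds P X Y hXm hYm hX hY hindep α r₁ r₂ hr₁1 ρ
      hρ.le ha hb hcc
    have hρ0 : (0:ℝ) < ρ := by linarith
    have hlρ : 0 < Real.log ρ := Real.log_pos hρ
    have hr0 : 0 < ρ ^ (-E) := Real.rpow_pos_of_pos hρ0 _
    have hp0 : 0 < (P ({ω | 1 + ρ * X ω < ρ ^ r₁} ∪ {ω | 1 + ρ ^ α * Y ω < ρ ^ r₂}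
        ∪ {ω | 1 + ρ * X ω + ρ ^ α * Y ω < ρ ^ (r₁ + r₂)})).toReal :=
      lt_of_lt_of_le (by positivity) hlow
    have l1 := Real.log_le_log (by positivity) hlow
    have e1 : Real.log (c₁ * ρ ^ (-E)) = Real.log c₁ + (-E) * Real.log ρ := by
      rw [Real.log_mul (ne_of_gt hc₁0) (ne_of_gt hr0), Real.log_rpow hρ0]
    calc Real.log c₁ / Real.log ρ + (-E)
        = (Real.log c₁ + (-E) * Real.log ρ) / Real.log ρ := by field_simp
      _ = Real.log (c₁ * ρ ^ (-E)) / Real.log ρ := by rw [e1]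
      _ ≤ _ := (div_le_div_iff_of_pos_right hlρ).2 l1
  · filter_upwards [(tendsto_rpow_atTop hr₁0).eventually_ge_atTop 2,
      (tendsto_rpow_atTop hr₂0).eventually_ge_atTop 2,
      (tendsto_rpow_atTop (by linarith : (0:ℝ) < r₁ + r₂)).eventually_ge_atTop 2,
      eventually_gt_atTop 1] with ρ ha hb hcc hρ
    obtain ⟨hlow, hupp⟩ := main_bounds P X Y hXm hYm hX hY hindep α r₁ r₂ hr₁1 ρ
      hρ.le ha hb hcc
    have hρ0 : (0:ℝ) < ρ := by linarith
    have hlρ : 0 < Real.log ρ := Real.log_pos hρ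
    have hr0 : 0 < ρ ^ (-E) := Real.rpow_pos_of_pos hρ0 _
    have hp0 : 0 < (P ({ω | 1 + ρ * X ω < ρ ^ r₁} ∪ {ω | 1 + ρ ^ α * Y ω < ρ ^ r₂}
        ∪ {ω | 1 + ρ * X ω + ρ ^ α * Y ω < ρ ^ (r₁ + r₂)})).toReal :=
      lt_of_lt_of_le (by positivity) hlow
    have l2 := Real.log_le_log hp0 hupp
    have e2 : Real.log (3 * ρ ^ (-E)) = Real.log 3 + (-E) * Real.log ρ := by
      rw [Real.log_mul (by norm_num) (ne_of_gt hr0), Real.log_rpow hρ0]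
    calc Real.log _ / Real.log ρ
        ≤ Real.log (3 * ρ ^ (-E)) / Real.log ρ := (div_le_div_iff_of_pos_right hlρ).2 l2
      _ = (Real.log 3 + (-E) * Real.log ρ) / Real.log ρ := by rw [e2]
      _ = Real.log 3 / Real.log ρ + (-E) := by field_simp
end
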